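/- arXiv:0804.2191 — 7 statements merged into one kernel-verified Lean document; each statement's English description precedes it below -/
import Mathlib

section
/- Let l > 0 and let Λ(l) be the triangular lattice of side l in the plane. For every R ≥ 0 and every lattice point p ∈ Λ(l), the number of points of Λ(l) contained in the closed disk of radius R centered at p equals n(R) = Σ_{i = -⌊R/(√3 l)⌋}^{⌊R/(√3 l)⌋} (1 + 2⌊√(R² − 3l²i²)/(3l)⌋) + 4 Σ_{i = 0}^{⌊R/(√3 l) − 1/2⌋} (1 + ⌊√(R² − 3l²(i + 1/2)²)/(3l) − 1/2⌋). -/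
/-- The point (a, b) of the Euclidean plane. -/
noncomputable def pt (a b : ℝ) : EuclideanSpace ℝ (Fin 2) :=
  (WithLp.equiv 2 (Fin 2 → ℝ)).symm ![a, b]

/-- The triangular lattice of side `l`: integer combinations of
`u = ((3/2)l, (√3/2)l)` and `v = ((3/2)l, −(√3/2)l)`. -/
noncomputable def triLattice (l : ℝ) : Set (EuclideanSpace ℝ (Fin 2)) :=
  { p | ∃ m k : ℤ, p = (m : ℝ) • pt (3 / 2 * l) (Real.sqrt 3 / 2 * l)
                     + (k : ℝ) • pt (3 / 2 * l) (-(Real.sqrt 3 / 2 * l)) }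

open Finset

attribute [local instance] Classical.propDecidable

lemma sqrt3_pos : (0:ℝ) < Real.sqrt 3 := Real.sqrt_pos.2 (by norm_num)
lemma sqrt3_sq : (Real.sqrt 3) ^ 2 = 3 := Real.sq_sqrt (by norm_num)
lemma one_le_sqrt3 : (1:ℝ) ≤ Real.sqrt 3 := by nlinarith [sqrt3_sq, sqrt3_pos]

lemma pt_smul (r a b : ℝ) : r • pt a b = pt (r*a) (r*b) := by
  ext i; fin_cases i <;> simp [pt]

lemma pt_add (a b c d : ℝ) : pt a b + pt c d = pt (a+c) (b+d) := by
  ext i; fin_cases i <;> simp [pt]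

lemma pt_norm (a b : ℝ) : ‖pt a b‖ = Real.sqrt (a^2 + b^2) := by
  rw [EuclideanSpace.norm_eq]
  simp [Fin.sum_univ_two, pt, sq_abs]

lemma pt_inj {a b c d : ℝ} (h : pt a b = pt c d) : a = c ∧ b = d :=
  ⟨congrArg (fun x => x 0) h, congrArg (fun x => x 1) h⟩

noncomputable def gmap (l : ℝ) (q : ℤ × ℤ) : EuclideanSpace ℝ (Fin 2) :=
  (q.1 : ℝ) • pt (3 / 2 * l) (Real.sqrt 3 / 2 * l)
    + (q.2 : ℝ) • pt (3 / 2 * l) (-(Real.sqrt 3 / 2 * l))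

lemma gmap_eq (l : ℝ) (q : ℤ × ℤ) :
    gmap l q = pt (((q.1:ℝ) + (q.2:ℝ)) * (3 / 2 * l)) (((q.1:ℝ) - (q.2:ℝ)) * (Real.sqrt 3 / 2 * l)) := by
  rw [gmap, pt_smul, pt_smul, pt_add]
  congr 1 <;> ring

lemma gmap_add (l : ℝ) (q r : ℤ × ℤ) :
    gmap l q + gmap l r = gmap l (q.1 + r.1, q.2 + r.2) := by
  rw [gmap_eq, gmap_eq, gmap_eq, pt_add]
  congr 1 <;> push_cast <;> ring

lemma gmap_inj (l : ℝ) (hl : 0 < l) : Function.Injective (gmap l) := by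
  rintro ⟨a, b⟩ ⟨c, d⟩ h
  rw [gmap_eq, gmap_eq] at h
  obtain ⟨h1, h2⟩ := pt_inj h
  have hl1 : (3 / 2 * l) ≠ 0 := by positivity
  have hl2 : (Real.sqrt 3 / 2 * l) ≠ 0 := by positivity
  have e1 : (a:ℝ) + (b:ℝ) = (c:ℝ) + (d:ℝ) := mul_right_cancel₀ hl1 h1
  have e2 : (a:ℝ) - (b:ℝ) = (c:ℝ) - (d:ℝ) := mul_right_cancel₀ hl2 h2
  have i1 : a + b = c + d := by exact_mod_cast e1
  have i2 : a - b = c - d := by exact_mod_cast e2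
  simp only [Prod.mk.injEq]
  omega

lemma gmap_norm_le (l R : ℝ) (hl : 0 < l) (hR : 0 ≤ R) (q : ℤ × ℤ) :
    ‖gmap l q‖ ≤ R ↔
      9 * l ^ 2 * ((q.1:ℝ) + (q.2:ℝ)) ^ 2 + 3 * l ^ 2 * ((q.1:ℝ) - (q.2:ℝ)) ^ 2 ≤ 4 * R ^ 2 := by
  have hs3sq := sqrt3_sq
  rw [gmap_eq, pt_norm]
  have hA : (((q.1:ℝ) + (q.2:ℝ)) * (3 / 2 * l)) ^ 2
      = 9 / 4 * l ^ 2 * ((q.1:ℝ) + (q.2:ℝ)) ^ 2 := by ring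
  have hB : (((q.1:ℝ) - (q.2:ℝ)) * (Real.sqrt 3 / 2 * l)) ^ 2
      = 3 / 4 * l ^ 2 * ((q.1:ℝ) - (q.2:ℝ)) ^ 2 := by
    rw [mul_pow, mul_pow, div_pow, hs3sq]; ring
  constructor
  · intro h
    have h0 : (0:ℝ) ≤ (((q.1:ℝ) + (q.2:ℝ)) * (3 / 2 * l)) ^ 2
        + (((q.1:ℝ) - (q.2:ℝ)) * (Real.sqrt 3 / 2 * l)) ^ 2 := by positivity
    have h2 : (((q.1:ℝ) + (q.2:ℝ)) * (3 / 2 * l)) ^ 2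
        + (((q.1:ℝ) - (q.2:ℝ)) * (Real.sqrt 3 / 2 * l)) ^ 2 ≤ R ^ 2 := by
      have := Real.sq_sqrt h0
      nlinarith [Real.sqrt_nonneg ((((q.1:ℝ) + (q.2:ℝ)) * (3 / 2 * l)) ^ 2
        + (((q.1:ℝ) - (q.2:ℝ)) * (Real.sqrt 3 / 2 * l)) ^ 2)]
    rw [hA, hB] at h2
    linarith
  · intro h
    calc Real.sqrt _ ≤ Real.sqrt (R ^ 2) := Real.sqrt_le_sqrt (by rw [hA, hB]; linarith)
    _ = R := Real.sqrt_sq hR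

lemma even_bound (l R : ℝ) (hl : 0 < l) (hR : 0 ≤ R) (c : ℝ) (hc : 1 ≤ c) (x : ℤ)
    (h : c * l * (x:ℝ) ≤ R) : x ≤ ⌊2 * R / l⌋ := by
  apply Int.le_floor.2
  rw [le_div_iff₀ hl]
  rcases le_or_gt 0 ((x:ℝ)) with hx | hx
  · nlinarith [mul_nonneg (mul_nonneg (sub_nonneg.2 hc) hx) hl.le]
  · nlinarith

lemma odd_bound (l R : ℝ) (hl : 0 < l) (hR : 0 ≤ R) (c : ℝ) (hc : 1 ≤ c) (x : ℤ)
    (h : c * l * (2 * (x:ℝ) + 1) ≤ 2 * R) : x ≤ ⌊2 * R / l⌋ := by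
  apply Int.le_floor.2
  rw [le_div_iff₀ hl]
  rcases le_or_gt 0 ((x:ℝ)) with hx | hx
  · nlinarith [mul_nonneg (mul_nonneg (sub_nonneg.2 hc) hx) hl.le]
  · nlinarith

lemma abs_le_of_sq_le {A B : ℝ} (hB : 0 ≤ B) (h : A ^ 2 ≤ B ^ 2) : |A| ≤ B := by
  rw [← Real.sqrt_sq_eq_abs]
  calc Real.sqrt (A ^ 2) ≤ Real.sqrt (B ^ 2) := Real.sqrt_le_sqrt h
  _ = B := Real.sqrt_sq hB

set_option maxHeartbeats 1000000 in
lemma geom (l R : ℝ) (hl : 0 < l) (hR : 0 ≤ R) (p : EuclideanSpace ℝ (Fin 2))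
    (hp : p ∈ triLattice l) :
    ((triLattice l ∩ Metric.closedBall p R).ncard : ℤ)
      = (((Icc (-⌊2*R/l⌋) ⌊2*R/l⌋ ×ˢ Icc (-⌊2*R/l⌋) ⌊2*R/l⌋).filter
          (fun q : ℤ×ℤ => 9*l^2*(q.1:ℝ)^2 + 3*l^2*(q.2:ℝ)^2 ≤ R^2)).card : ℤ)
      + (((Icc (-⌊2*R/l⌋-1) ⌊2*R/l⌋ ×ˢ Icc (-⌊2*R/l⌋-1) ⌊2*R/l⌋).filter
          (fun q : ℤ×ℤ => 9*l^2*(2*(q.1:ℝ)+1)^2 + 3*l^2*(2*(q.2:ℝ)+1)^2 ≤ 4*R^2)).card : ℤ) := by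
  obtain ⟨m0, k0, hp0⟩ := hp
  have hp0' : p = gmap l (m0, k0) := hp0
  have hs3 := sqrt3_pos
  have hs3sq := sqrt3_sq
  set Fe : Finset (ℤ×ℤ) := (Icc (-⌊2*R/l⌋) ⌊2*R/l⌋ ×ˢ Icc (-⌊2*R/l⌋) ⌊2*R/l⌋).filter
          (fun q : ℤ×ℤ => 9*l^2*(q.1:ℝ)^2 + 3*l^2*(q.2:ℝ)^2 ≤ R^2) with hFe
  set Fo : Finset (ℤ×ℤ) := (Icc (-⌊2*R/l⌋-1) ⌊2*R/l⌋ ×ˢ Icc (-⌊2*R/l⌋-1) ⌊2*R/l⌋).filter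
          (fun q : ℤ×ℤ => 9*l^2*(2*(q.1:ℝ)+1)^2 + 3*l^2*(2*(q.2:ℝ)+1)^2 ≤ 4*R^2) with hFo
  set φe : ℤ×ℤ → EuclideanSpace ℝ (Fin 2) := fun q => gmap l (q.1 + q.2, q.1 - q.2) + p with hφe
  set φo : ℤ×ℤ → EuclideanSpace ℝ (Fin 2) := fun q => gmap l (q.1 + q.2 + 1, q.1 - q.2) + p with hφo
  have hinj_e : Function.Injective φe := by
    rintro ⟨a, b⟩ ⟨c, d⟩ h
    have h2 := gmap_inj l hl (add_right_cancel h)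
    simp only [Prod.mk.injEq] at h2 ⊢
    omega
  have hinj_o : Function.Injective φo := by
    rintro ⟨a, b⟩ ⟨c, d⟩ h
    have h2 := gmap_inj l hl (add_right_cancel h)
    simp only [Prod.mk.injEq] at h2 ⊢
    omega
  have hdisj : Disjoint (Fe.image φe) (Fo.image φo) := by
    rw [Finset.disjoint_left]
    rintro x hx hx'
    rw [Finset.mem_image] at hx hx'
    obtain ⟨q, _, hq⟩ := hx
    obtain ⟨r, _, hr⟩ := hx'
    rw [← hq] at hr
    have h2 := gmap_inj l hl (add_right_cancel hr)
    simp only [Prod.mk.injEq] at h2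
    omega
  have hset : triLattice l ∩ Metric.closedBall p R = ↑(Fe.image φe ∪ Fo.image φo) := by
    ext x
    simp only [Set.mem_inter_iff, Finset.coe_union, Set.mem_union, Finset.coe_image,
      Set.mem_image, Finset.mem_coe]
    constructor
    · rintro ⟨⟨m, k, hx⟩, hball⟩
      have hx' : x = gmap l (m, k) := hx
      have hdec : gmap l (m - m0, k - k0) + p = gmap l (m, k) := by
        rw [hp0', gmap_add]
        norm_num
      have hnorm : ‖gmap l (m - m0, k - k0)‖ ≤ R := by
        rw [Metric.mem_closedBall, hx', ← hdec, dist_eq_norm, add_sub_cancel_right] at hball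
        exact hball
      have hcond := (gmap_norm_le l R hl hR (m - m0, k - k0)).1 hnorm
      simp only at hcond
      set a : ℤ := m - m0 with ha
      set b : ℤ := k - k0 with hb
      rcases Int.even_or_odd (a + b) with ⟨j, hj⟩ | ⟨j, hj⟩
      · -- even case
        obtain ⟨i, hi⟩ : ∃ i, a - b = 2 * i := ⟨(a - b)/2, by omega⟩
        left
        refine ⟨(j, i), ?_, ?_⟩
        · -- membership in Fe
          have hj2 : a + b = 2 * j := by omega
          have hjr : (a:ℝ) + (b:ℝ) = 2 * (j:ℝ) := by exact_mod_cast hj2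
          have hir : (a:ℝ) - (b:ℝ) = 2 * (i:ℝ) := by exact_mod_cast hi
          rw [hjr, hir] at hcond
          have hcnd : 9*l^2*(j:ℝ)^2 + 3*l^2*(i:ℝ)^2 ≤ R^2 := by nlinarith
          rw [hFe, Finset.mem_filter, Finset.mem_product, Finset.mem_Icc, Finset.mem_Icc]
          refine ⟨⟨⟨?_, ?_⟩, ?_, ?_⟩, hcnd⟩
          · have hsq' : (3*l*(-(j:ℝ)))^2 ≤ R^2 := by nlinarith
            have habs := abs_le_of_sq_le hR hsq'
            have := even_bound l R hl hR 3 (by norm_num) (-j)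
              (by push_cast; calc 3*l*(-(j:ℝ)) ≤ |3*l*(-(j:ℝ))| := le_abs_self _
                  _ ≤ R := habs)
            omega
          · have hsq' : (3*l*((j:ℝ)))^2 ≤ R^2 := by nlinarith
            have habs := abs_le_of_sq_le hR hsq'
            exact even_bound l R hl hR 3 (by norm_num) j
              (le_trans (le_abs_self _) habs)
          · have hq : (Real.sqrt 3*l*(-(i:ℝ)))^2 = 3*l^2*(i:ℝ)^2 := by
              rw [mul_pow, mul_pow, hs3sq] <;> try ring
            have hsq' : (Real.sqrt 3*l*(-(i:ℝ)))^2 ≤ R^2 := by rw [hq]; nlinarith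
            have habs := abs_le_of_sq_le hR hsq'
            have := even_bound l R hl hR (Real.sqrt 3) one_le_sqrt3 (-i)
              (by push_cast; exact le_trans (le_abs_self _) habs)
            omega
          · have hq : (Real.sqrt 3*l*((i:ℝ)))^2 = 3*l^2*(i:ℝ)^2 := by
              rw [mul_pow, mul_pow, hs3sq] <;> try ring
            have hsq' : (Real.sqrt 3*l*((i:ℝ)))^2 ≤ R^2 := by rw [hq]; nlinarith
            have habs := abs_le_of_sq_le hR hsq'
            exact even_bound l R hl hR (Real.sqrt 3) one_le_sqrt3 i
              (le_trans (le_abs_self _) habs)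
        · -- φe (j,i) = x
          rw [hφe]
          simp only
          have : ((j + i : ℤ), (j - i : ℤ)) = (a, b) := by
            simp only [Prod.mk.injEq]; omega
          rw [this, ha, hb, hdec, hx']
      · -- odd case
        obtain ⟨i, hi⟩ : ∃ i, a - b = 2 * i + 1 := ⟨(a - b - 1)/2, by omega⟩
        right
        refine ⟨(j, i), ?_, ?_⟩
        · have hj2 : a + b = 2 * j + 1 := by omega
          have hjr : (a:ℝ) + (b:ℝ) = 2 * (j:ℝ) + 1 := by exact_mod_cast hj2
          have hir : (a:ℝ) - (b:ℝ) = 2 * (i:ℝ) + 1 := by exact_mod_cast hi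
          rw [hjr, hir] at hcond
          rw [hFo, Finset.mem_filter, Finset.mem_product, Finset.mem_Icc, Finset.mem_Icc]
          have h2R : 0 ≤ 2 * R := by linarith
          refine ⟨⟨⟨?_, ?_⟩, ?_, ?_⟩, hcond⟩
          · have hsq' : (3*l*(2*(j:ℝ)+1))^2 ≤ (2*R)^2 := by nlinarith
            have habs := abs_le_of_sq_le h2R hsq'
            have := odd_bound l R hl hR 3 (by norm_num) (-j-1)
              (by push_cast;
                  calc 3*l*(2*(-(j:ℝ)-1)+1) = -(3*l*(2*(j:ℝ)+1)) := by ring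
                  _ ≤ |3*l*(2*(j:ℝ)+1)| := neg_le_abs _
                  _ ≤ 2*R := habs)
            omega
          · have hsq' : (3*l*(2*(j:ℝ)+1))^2 ≤ (2*R)^2 := by nlinarith
            have habs := abs_le_of_sq_le h2R hsq'
            exact odd_bound l R hl hR 3 (by norm_num) j (le_trans (le_abs_self _) habs)
          · have hq : (Real.sqrt 3*l*(2*(i:ℝ)+1))^2 = 3*l^2*(2*(i:ℝ)+1)^2 := by
              rw [mul_pow, mul_pow, hs3sq] <;> try ring
            have hsq' : (Real.sqrt 3*l*(2*(i:ℝ)+1))^2 ≤ (2*R)^2 := by rw [hq]; nlinarith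
            have habs := abs_le_of_sq_le h2R hsq'
            have := odd_bound l R hl hR (Real.sqrt 3) one_le_sqrt3 (-i-1)
              (by push_cast;
                  calc Real.sqrt 3*l*(2*(-(i:ℝ)-1)+1) = -(Real.sqrt 3*l*(2*(i:ℝ)+1)) := by ring
                  _ ≤ |Real.sqrt 3*l*(2*(i:ℝ)+1)| := neg_le_abs _
                  _ ≤ 2*R := habs)
            omega
          · have hq : (Real.sqrt 3*l*(2*(i:ℝ)+1))^2 = 3*l^2*(2*(i:ℝ)+1)^2 := by
              rw [mul_pow, mul_pow, hs3sq] <;> try ring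
            have hsq' : (Real.sqrt 3*l*(2*(i:ℝ)+1))^2 ≤ (2*R)^2 := by rw [hq]; nlinarith
            have habs := abs_le_of_sq_le h2R hsq'
            exact odd_bound l R hl hR (Real.sqrt 3) one_le_sqrt3 i
              (le_trans (le_abs_self _) habs)
        · rw [hφo]
          simp only
          have : ((j + i + 1 : ℤ), (j - i : ℤ)) = (a, b) := by
            simp only [Prod.mk.injEq]; omega
          rw [this, ha, hb, hdec, hx']
    · rintro (⟨⟨j, i⟩, hmem, rfl⟩ | ⟨⟨j, i⟩, hmem, rfl⟩)
      · rw [hFe, Finset.mem_filter] at hmem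
        have hcnd := hmem.2
        simp only at hcnd
        constructor
        · refine ⟨j + i + m0, j - i + k0, ?_⟩
          rw [hφe]
          simp only
          rw [hp0', gmap_add]
          rfl
        · rw [Metric.mem_closedBall, hφe]
          simp only
          rw [dist_eq_norm, add_sub_cancel_right]
          apply (gmap_norm_le l R hl hR _).2
          simp only
          push_cast
          nlinarith
      · rw [hFo, Finset.mem_filter] at hmem
        have hcnd := hmem.2
        simp only at hcnd
        constructor
        · refine ⟨j + i + 1 + m0, j - i + k0, ?_⟩
          rw [hφo]
          simp only
          rw [hp0', gmap_add]
          rfl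
        · rw [Metric.mem_closedBall, hφo]
          simp only
          rw [dist_eq_norm, add_sub_cancel_right]
          apply (gmap_norm_le l R hl hR _).2
          simp only
          push_cast
          nlinarith
  rw [hset, Set.ncard_coe_finset, Finset.card_union_of_disjoint hdisj,
    Finset.card_image_of_injective _ hinj_e, Finset.card_image_of_injective _ hinj_o]
  push_cast
  ring

lemma card_filter_prod (s t : Finset ℤ) (P : ℤ × ℤ → Prop) :
    ((s ×ˢ t).filter P).card = ∑ i ∈ t, (s.filter fun j => P (j, i)).card := by
  rw [Finset.card_eq_sum_card_fiberwise (f := Prod.snd) (t := t)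
    (fun x hx => (Finset.mem_product.1 (Finset.mem_filter.1 hx).1).2)]
  refine Finset.sum_congr rfl fun i hi => ?_
  have : ((s ×ˢ t).filter P).filter (fun q => q.2 = i)
      = (s.filter fun j => P (j, i)) ×ˢ {i} := by
    ext ⟨a, b⟩
    simp only [Finset.mem_filter, Finset.mem_product, Finset.mem_singleton]
    constructor
    · rintro ⟨⟨⟨ha, hb⟩, hP⟩, rfl⟩; exact ⟨⟨ha, hP⟩, rfl⟩
    · rintro ⟨⟨ha, hP⟩, rfl⟩; exact ⟨⟨⟨ha, hi⟩, hP⟩, rfl⟩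
  rw [this, Finset.card_product, Finset.card_singleton, mul_one]


lemma ratio_le (l R : ℝ) (hl : 0 < l) (hR : 0 ≤ R) : R / (Real.sqrt 3 * l) ≤ 2 * R / l := by
  rw [div_le_div_iff₀ (by positivity) hl]
  nlinarith [one_le_sqrt3, sqrt3_pos, mul_nonneg (mul_nonneg hR hl.le) (sub_nonneg.2 one_le_sqrt3)]


lemma even_row (l R : ℝ) (hl : 0 < l) (hR : 0 ≤ R) (i : ℤ)
    (hi : 3 * l ^ 2 * (i : ℝ) ^ 2 ≤ R ^ 2) :
    (Icc (-⌊2 * R / l⌋) ⌊2 * R / l⌋).filter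
        (fun j : ℤ => 9 * l ^ 2 * (j : ℝ) ^ 2 + 3 * l ^ 2 * (i : ℝ) ^ 2 ≤ R ^ 2)
      = Icc (-⌊Real.sqrt (R ^ 2 - 3 * l ^ 2 * (i : ℝ) ^ 2) / (3 * l)⌋)
            ⌊Real.sqrt (R ^ 2 - 3 * l ^ 2 * (i : ℝ) ^ 2) / (3 * l)⌋ := by
  set c : ℝ := R ^ 2 - 3 * l ^ 2 * (i : ℝ) ^ 2 with hcdef
  have hc : 0 ≤ c := by simp [hcdef]; linarith
  set t : ℝ := Real.sqrt c / (3 * l) with htdef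
  have h3l : (0 : ℝ) < 3 * l := by linarith
  have hsq : Real.sqrt c ^ 2 = c := Real.sq_sqrt hc
  have ht0 : 0 ≤ t := by positivity
  have h4 : 3 * l * t = Real.sqrt c := by rw [htdef, mul_div_assoc', mul_div_cancel_left₀ _ h3l.ne']
  have hsR : Real.sqrt c ≤ R := by
    calc Real.sqrt c ≤ Real.sqrt (R ^ 2) := Real.sqrt_le_sqrt (by nlinarith)
    _ = R := Real.sqrt_sq hR
  have htN : t ≤ 2 * R / l := by
    rw [htdef, div_le_div_iff₀ h3l hl]
    nlinarith
  have key : ∀ j : ℤ, (9 * l ^ 2 * (j : ℝ) ^ 2 + 3 * l ^ 2 * (i : ℝ) ^ 2 ≤ R ^ 2)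
      ↔ ((j : ℝ) ≤ t ∧ (-j : ℝ) ≤ t) := by
    intro j
    constructor
    · intro h
      have hj : (3 * l * (j : ℝ)) ^ 2 ≤ c := by rw [hcdef]; nlinarith
      have habs : |3 * l * (j : ℝ)| ≤ Real.sqrt c := by
        rw [← Real.sqrt_sq_eq_abs]; exact Real.sqrt_le_sqrt hj
      have h1 := (abs_le.1 habs).1
      have h2 := (abs_le.1 habs).2
      constructor
      · rw [htdef, le_div_iff₀ h3l]; nlinarith
      · rw [htdef, le_div_iff₀ h3l]; nlinarith
    · rintro ⟨h1, h2⟩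
      have hjt : (j : ℝ) ^ 2 ≤ t ^ 2 := sq_le_sq' (by linarith) h1
      have : c = R ^ 2 - 3 * l ^ 2 * (i : ℝ) ^ 2 := hcdef
      nlinarith
  ext j
  have e1 : ((j : ℝ) ≤ t) = (j ≤ ⌊t⌋) := propext Int.le_floor.symm
  have e2 : (-(j : ℝ) ≤ t) = (-j ≤ ⌊t⌋) := by rw [Int.le_floor, Int.cast_neg]
  have hN : ⌊t⌋ ≤ ⌊2 * R / l⌋ := Int.floor_le_floor htN
  have ht0' : (0:ℤ) ≤ ⌊t⌋ := by positivity
  simp only [Finset.mem_filter, Finset.mem_Icc, key, e1, e2]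
  omega

set_option maxHeartbeats 1000000 in
lemma odd_row (l R : ℝ) (hl : 0 < l) (hR : 0 ≤ R) (i : ℤ)
    (hi : 3 * l ^ 2 * ((i : ℝ) + 1 / 2) ^ 2 ≤ R ^ 2) :
    (Icc (-⌊2 * R / l⌋ - 1) ⌊2 * R / l⌋).filter
        (fun j : ℤ => 9 * l ^ 2 * (2 * (j : ℝ) + 1) ^ 2
            + 3 * l ^ 2 * (2 * (i : ℝ) + 1) ^ 2 ≤ 4 * R ^ 2)
      = Icc (-⌊Real.sqrt (R ^ 2 - 3 * l ^ 2 * ((i : ℝ) + 1 / 2) ^ 2) / (3 * l) - 1 / 2⌋ - 1)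
            ⌊Real.sqrt (R ^ 2 - 3 * l ^ 2 * ((i : ℝ) + 1 / 2) ^ 2) / (3 * l) - 1 / 2⌋ := by
  obtain ⟨c, hcdef⟩ : ∃ c : ℝ, c = R ^ 2 - 3 * l ^ 2 * ((i : ℝ) + 1 / 2) ^ 2 := ⟨_, rfl⟩
  rw [← hcdef]
  have hc : 0 ≤ c := by rw [hcdef]; linarith
  obtain ⟨S, hSdef⟩ : ∃ S : ℝ, S = Real.sqrt c / (3 * l) := ⟨_, rfl⟩
  rw [← hSdef]
  have h3l : (0 : ℝ) < 3 * l := by linarith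
  have hsq : Real.sqrt c ^ 2 = c := Real.sq_sqrt hc
  have hS0 : 0 ≤ S := by rw [hSdef]; positivity
  have h4 : 3 * l * S = Real.sqrt c := by rw [hSdef, mul_div_assoc', mul_div_cancel_left₀ _ h3l.ne']
  have h5 : 9 * l ^ 2 * S ^ 2 = c := by rw [← hsq, ← h4]; ring
  have hsR : Real.sqrt c ≤ R := by
    calc Real.sqrt c ≤ Real.sqrt (R ^ 2) :=
      Real.sqrt_le_sqrt (by rw [hcdef]; nlinarith [sq_nonneg ((i:ℝ) + 1/2), sq_nonneg l])
    _ = R := Real.sqrt_sq hR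
  have htN : S - 1 / 2 ≤ 2 * R / l := by
    have : S ≤ 2 * R / l := by
      rw [hSdef]; rw [div_le_div_iff₀ h3l hl]; nlinarith
    linarith
  have key : ∀ j : ℤ, (9 * l ^ 2 * (2 * (j : ℝ) + 1) ^ 2
        + 3 * l ^ 2 * (2 * (i : ℝ) + 1) ^ 2 ≤ 4 * R ^ 2)
      ↔ ((j : ℝ) ≤ S - 1 / 2 ∧ -(j : ℝ) - 1 ≤ S - 1 / 2) := by
    intro j
    constructor
    · intro h
      have hj : (3 * l * ((j : ℝ) + 1 / 2)) ^ 2 ≤ c := by rw [hcdef]; nlinarith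
      have habs : |3 * l * ((j : ℝ) + 1 / 2)| ≤ Real.sqrt c := by
        rw [← Real.sqrt_sq_eq_abs]; exact Real.sqrt_le_sqrt hj
      have h1 := (abs_le.1 habs).1
      have h2 := (abs_le.1 habs).2
      have hup : (j : ℝ) + 1 / 2 ≤ S := by rw [hSdef]; rw [le_div_iff₀ h3l]; nlinarith
      have hdn : -((j : ℝ) + 1 / 2) ≤ S := by rw [hSdef]; rw [le_div_iff₀ h3l]; nlinarith
      exact ⟨by linarith, by linarith⟩
    · rintro ⟨h1, h2⟩
      have hjt : ((j : ℝ) + 1 / 2) ^ 2 ≤ S ^ 2 := sq_le_sq' (by linarith) (by linarith)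
      have h6 : 36 * l ^ 2 * ((j : ℝ) + 1 / 2) ^ 2 ≤ 36 * l ^ 2 * S ^ 2 :=
        mul_le_mul_of_nonneg_left hjt (by positivity)
      have h7 : 36 * l ^ 2 * S ^ 2 = 4 * c := by linarith [h5]
      have h8 : c = R ^ 2 - 3 * l ^ 2 * ((i : ℝ) + 1 / 2) ^ 2 := hcdef
      nlinarith [h6, h7, h8]
  ext j
  have e1 : ((j : ℝ) ≤ S - 1 / 2) = (j ≤ ⌊S - 1 / 2⌋) := propext Int.le_floor.symm
  have e2 : (-(j : ℝ) - 1 ≤ S - 1 / 2) = (-j - 1 ≤ ⌊S - 1 / 2⌋) := by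
    rw [Int.le_floor]; push_cast; ring_nf
  have hN : ⌊S - 1 / 2⌋ ≤ ⌊2 * R / l⌋ := Int.floor_le_floor htN
  simp only [Finset.mem_filter, Finset.mem_Icc, key, e1, e2]
  omega

lemma even_card (l R : ℝ) (hl : 0 < l) (hR : 0 ≤ R) :
    (((Icc (-⌊2 * R / l⌋) ⌊2 * R / l⌋ ×ˢ Icc (-⌊2 * R / l⌋) ⌊2 * R / l⌋).filter
        (fun q : ℤ × ℤ => 9 * l ^ 2 * (q.1 : ℝ) ^ 2 + 3 * l ^ 2 * (q.2 : ℝ) ^ 2 ≤ R ^ 2)).card : ℤ)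
      = ∑ i ∈ Icc (-⌊R / (Real.sqrt 3 * l)⌋) ⌊R / (Real.sqrt 3 * l)⌋,
          (1 + 2 * ⌊Real.sqrt (R ^ 2 - 3 * l ^ 2 * (i : ℝ) ^ 2) / (3 * l)⌋) := by
  have hs3 := sqrt3_pos
  have hs3sq := sqrt3_sq
  have hs3l : 0 < Real.sqrt 3 * l := by positivity
  have hK0 : (0:ℤ) ≤ ⌊R / (Real.sqrt 3 * l)⌋ := Int.floor_nonneg.2 (by positivity)
  have hKN : ⌊R / (Real.sqrt 3 * l)⌋ ≤ ⌊2 * R / l⌋ :=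
    Int.floor_le_floor (ratio_le l R hl hR)
  have hsub : Icc (-⌊R / (Real.sqrt 3 * l)⌋) ⌊R / (Real.sqrt 3 * l)⌋
      ⊆ Icc (-⌊2 * R / l⌋) ⌊2 * R / l⌋ := Finset.Icc_subset_Icc (by omega) (by omega)
  have hzero : ∀ i ∈ Icc (-⌊2 * R / l⌋) ⌊2 * R / l⌋,
      i ∉ Icc (-⌊R / (Real.sqrt 3 * l)⌋) ⌊R / (Real.sqrt 3 * l)⌋ →
      ((((Icc (-⌊2 * R / l⌋) ⌊2 * R / l⌋).filter
        (fun j : ℤ => 9 * l ^ 2 * (j : ℝ) ^ 2 + 3 * l ^ 2 * (i : ℝ) ^ 2 ≤ R ^ 2)).card : ℤ) = 0) := by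
    intro i _ hiK
    rw [Finset.mem_Icc] at hiK
    have habs : R / (Real.sqrt 3 * l) < |(i:ℝ)| := by
      rcases (by omega : ⌊R / (Real.sqrt 3 * l)⌋ + 1 ≤ i ∨ i ≤ -(⌊R / (Real.sqrt 3 * l)⌋ + 1)) with h | h
      · calc R / (Real.sqrt 3 * l) < ⌊R / (Real.sqrt 3 * l)⌋ + 1 := Int.lt_floor_add_one _
        _ ≤ (i:ℝ) := by exact_mod_cast Int.cast_le.2 h
        _ ≤ |(i:ℝ)| := le_abs_self _
      · calc R / (Real.sqrt 3 * l) < ⌊R / (Real.sqrt 3 * l)⌋ + 1 := Int.lt_floor_add_one _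
        _ ≤ (-i:ℝ) := by
            have : ((⌊R / (Real.sqrt 3 * l)⌋ + 1 : ℤ):ℝ) ≤ ((-i : ℤ):ℝ) := Int.cast_le.2 (by omega)
            push_cast at this ⊢; linarith
        _ ≤ |(i:ℝ)| := neg_le_abs _
    have hgt : R ^ 2 < 3 * l ^ 2 * (i : ℝ) ^ 2 := by
      have h1 : R < |(i:ℝ)| * (Real.sqrt 3 * l) := (div_lt_iff₀ hs3l).1 habs
      have h2 : R ^ 2 < (|(i:ℝ)| * (Real.sqrt 3 * l)) ^ 2 := by
        apply pow_lt_pow_left₀ h1 hR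
        norm_num
      have h3 : (|(i:ℝ)| * (Real.sqrt 3 * l)) ^ 2 = 3 * l ^ 2 * (i:ℝ) ^ 2 := by
        rw [mul_pow, mul_pow, hs3sq, sq_abs] <;> try ring
      linarith
    norm_num
    intro j _ _
    nlinarith [sq_nonneg ((j:ℝ)), sq_nonneg l]
  rw [card_filter_prod]
  push_cast
  rw [← Finset.sum_subset hsub hzero]
  apply Finset.sum_congr rfl
  intro i hi
  rw [Finset.mem_Icc] at hi
  have hire : |(i:ℝ)| ≤ R / (Real.sqrt 3 * l) := by
    rw [abs_le]
    constructor
    · have := Int.le_floor.1 (by omega : -i ≤ ⌊R / (Real.sqrt 3 * l)⌋)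
      push_cast at this; linarith
    · have := Int.le_floor.1 hi.2; push_cast at this; linarith
  have habs : Real.sqrt 3 * l * |(i:ℝ)| ≤ R := by
    rw [le_div_iff₀ hs3l] at hire; linarith
  have hi3 : 3 * l ^ 2 * (i : ℝ) ^ 2 ≤ R ^ 2 := by
    have h2 : (Real.sqrt 3 * l * |(i:ℝ)|) ^ 2 ≤ R ^ 2 :=
      pow_le_pow_left₀ (by positivity) habs 2
    have h3 : (Real.sqrt 3 * l * |(i:ℝ)|) ^ 2 = 3 * l ^ 2 * (i:ℝ) ^ 2 := by
      rw [mul_pow, mul_pow, hs3sq, sq_abs] <;> try ring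
    linarith
  rw [even_row l R hl hR i hi3, Int.card_Icc]
  have ht0 : (0:ℤ) ≤ ⌊Real.sqrt (R ^ 2 - 3 * l ^ 2 * (i : ℝ) ^ 2) / (3 * l)⌋ :=
    Int.floor_nonneg.2 (by positivity)
  rw [Int.toNat_of_nonneg (by omega)]
  push_cast
  ring

lemma odd_card (l R : ℝ) (hl : 0 < l) (hR : 0 ≤ R) :
    ((((Icc (-⌊2 * R / l⌋ - 1) ⌊2 * R / l⌋ ×ˢ Icc (-⌊2 * R / l⌋ - 1) ⌊2 * R / l⌋).filter
        (fun q : ℤ × ℤ => 9 * l ^ 2 * (2 * (q.1 : ℝ) + 1) ^ 2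
            + 3 * l ^ 2 * (2 * (q.2 : ℝ) + 1) ^ 2 ≤ 4 * R ^ 2)).card : ℤ)
      = 4 * ∑ i ∈ Icc (0 : ℤ) ⌊R / (Real.sqrt 3 * l) - 1 / 2⌋,
          (1 + ⌊Real.sqrt (R ^ 2 - 3 * l ^ 2 * ((i : ℝ) + 1 / 2) ^ 2) / (3 * l) - 1 / 2⌋)) := by
  have hs3 := sqrt3_pos
  have hs3sq := sqrt3_sq
  have hs3l : 0 < Real.sqrt 3 * l := by positivity
  have hN0 : (0:ℤ) ≤ ⌊2 * R / l⌋ := Int.floor_nonneg.2 (by positivity)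
  have hKN : ⌊R / (Real.sqrt 3 * l) - 1 / 2⌋ ≤ ⌊2 * R / l⌋ :=
    Int.floor_le_floor (by linarith [ratio_le l R hl hR])
  -- the row count as an integer-valued function
  set f : ℤ → ℤ := fun i =>
    (((Icc (-⌊2 * R / l⌋ - 1) ⌊2 * R / l⌋).filter
      (fun j : ℤ => 9 * l ^ 2 * (2 * (j : ℝ) + 1) ^ 2
          + 3 * l ^ 2 * (2 * (i : ℝ) + 1) ^ 2 ≤ 4 * R ^ 2)).card : ℤ) with hf
  have step1 : (((Icc (-⌊2 * R / l⌋ - 1) ⌊2 * R / l⌋ ×ˢ Icc (-⌊2 * R / l⌋ - 1) ⌊2 * R / l⌋).filter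
        (fun q : ℤ × ℤ => 9 * l ^ 2 * (2 * (q.1 : ℝ) + 1) ^ 2
            + 3 * l ^ 2 * (2 * (q.2 : ℝ) + 1) ^ 2 ≤ 4 * R ^ 2)).card : ℤ)
      = ∑ i ∈ Icc (-⌊2 * R / l⌋ - 1) ⌊2 * R / l⌋, f i := by
    rw [card_filter_prod]
    push_cast
    rfl
  rw [step1]
  have hsplit : Icc (-⌊2 * R / l⌋ - 1) ⌊2 * R / l⌋
      = Icc (-⌊2 * R / l⌋ - 1) (-1) ∪ Icc 0 ⌊2 * R / l⌋ := by
    ext x; simp only [Finset.mem_Icc, Finset.mem_union]; omega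
  have hdisj : Disjoint (Icc (-⌊2 * R / l⌋ - 1) (-1)) (Icc (0:ℤ) ⌊2 * R / l⌋) := by
    rw [Finset.disjoint_left]; intro x hx hx'
    rw [Finset.mem_Icc] at hx hx'; omega
  rw [hsplit, Finset.sum_union hdisj]
  have hneg : ∑ i ∈ Icc (-⌊2 * R / l⌋ - 1) (-1), f i = ∑ i ∈ Icc (0:ℤ) ⌊2 * R / l⌋, f i := by
    refine Finset.sum_nbij' (fun x => -1 - x) (fun x => -1 - x) ?_ ?_ ?_ ?_ ?_
    · intro a ha; simp only [Finset.mem_Icc] at ha ⊢; omega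
    · intro a ha; simp only [Finset.mem_Icc] at ha ⊢; omega
    · intro a _; omega
    · intro a _; omega
    · intro a _
      rw [hf]
      dsimp only
      congr 1
      congr 1
      apply Finset.filter_congr
      intro j _
      have hcast : ((-1 - a : ℤ) : ℝ) = -1 - (a : ℝ) := by push_cast; ring
      rw [hcast]
      constructor <;> intro h <;> nlinarith [h]
  rw [hneg, ← two_mul]
  -- now restrict the sum
  have hsub : Icc (0:ℤ) ⌊R / (Real.sqrt 3 * l) - 1 / 2⌋ ⊆ Icc (0:ℤ) ⌊2 * R / l⌋ :=
    Finset.Icc_subset_Icc le_rfl hKN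
  have hzero : ∀ i ∈ Icc (0:ℤ) ⌊2 * R / l⌋,
      i ∉ Icc (0:ℤ) ⌊R / (Real.sqrt 3 * l) - 1 / 2⌋ → f i = 0 := by
    intro i hiN hiK
    rw [Finset.mem_Icc] at hiN
    rw [Finset.mem_Icc] at hiK
    have hgt' : R / (Real.sqrt 3 * l) - 1 / 2 < (i : ℝ) := by
      calc R / (Real.sqrt 3 * l) - 1 / 2 < ⌊R / (Real.sqrt 3 * l) - 1 / 2⌋ + 1 :=
        Int.lt_floor_add_one _
      _ ≤ (i:ℝ) := by
          have hle : ⌊R / (Real.sqrt 3 * l) - 1 / 2⌋ + 1 ≤ i := by omega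
          have hle' : ((⌊R / (Real.sqrt 3 * l) - 1 / 2⌋ + 1 : ℤ) : ℝ) ≤ (i:ℝ) := by
            exact_mod_cast hle
          push_cast at hle'; linarith
    have h1 : R < ((i:ℝ) + 1 / 2) * (Real.sqrt 3 * l) :=
      (div_lt_iff₀ hs3l).1 (by linarith : R / (Real.sqrt 3 * l) < (i:ℝ) + 1 / 2)
    have hgt : R ^ 2 < 3 * l ^ 2 * ((i : ℝ) + 1 / 2) ^ 2 := by
      have h2 : R ^ 2 < (((i:ℝ) + 1 / 2) * (Real.sqrt 3 * l)) ^ 2 := by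
        apply pow_lt_pow_left₀ h1 hR; norm_num
      have h3 : (((i:ℝ) + 1 / 2) * (Real.sqrt 3 * l)) ^ 2 = 3 * l ^ 2 * ((i:ℝ) + 1 / 2) ^ 2 := by
        rw [mul_pow, mul_pow, hs3sq] <;> try ring
      linarith
    rw [hf]
    norm_num
    intro j _ _
    nlinarith [sq_nonneg (2 * (j:ℝ) + 1), sq_nonneg l]
  rw [← Finset.sum_subset hsub hzero]
  rw [Finset.mul_sum, Finset.mul_sum]
  apply Finset.sum_congr rfl
  intro i hi
  rw [Finset.mem_Icc] at hi
  have hir : (i : ℝ) ≤ R / (Real.sqrt 3 * l) - 1 / 2 := Int.le_floor.1 hi.2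
  have hi3 : 3 * l ^ 2 * ((i : ℝ) + 1 / 2) ^ 2 ≤ R ^ 2 := by
    have h1 : ((i:ℝ) + 1 / 2) * (Real.sqrt 3 * l) ≤ R := by
      rw [← le_div_iff₀ hs3l]; linarith
    have hi0 : (0:ℝ) ≤ (i:ℝ) := by exact_mod_cast hi.1
    have h2 : (((i:ℝ) + 1 / 2) * (Real.sqrt 3 * l)) ^ 2 ≤ R ^ 2 := by
      apply pow_le_pow_left₀ (mul_nonneg (by linarith) hs3l.le) h1
    have h3 : (((i:ℝ) + 1 / 2) * (Real.sqrt 3 * l)) ^ 2 = 3 * l ^ 2 * ((i:ℝ) + 1 / 2) ^ 2 := by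
      rw [mul_pow, mul_pow, hs3sq] <;> try ring
    linarith
  rw [hf]
  simp only
  rw [odd_row l R hl hR i hi3, Int.card_Icc]
  have hs1 : (-1:ℤ) ≤ ⌊Real.sqrt (R ^ 2 - 3 * l ^ 2 * ((i : ℝ) + 1 / 2) ^ 2) / (3 * l) - 1 / 2⌋ := by
    apply Int.le_floor.2
    have : (0:ℝ) ≤ Real.sqrt (R ^ 2 - 3 * l ^ 2 * ((i : ℝ) + 1 / 2) ^ 2) / (3 * l) :=
      div_nonneg (Real.sqrt_nonneg _) (by linarith)
    push_cast; linarith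
  rw [Int.toNat_of_nonneg (by omega)]
  push_cast
  ring


/-- The number of points of the triangular lattice of side `l > 0` in the closed disk of
radius `R ≥ 0` centered at any lattice point `p` equals
`n(R) = Σ_{i=-⌊R/(√3 l)⌋}^{⌊R/(√3 l)⌋} (1 + 2⌊√(R² − 3l²i²)/(3l)⌋)
      + 4 Σ_{i=0}^{⌊R/(√3 l) − 1/2⌋} (1 + ⌊√(R² − 3l²(i+1/2)²)/(3l) − 1/2⌋)`. -/
theorem lattice_points_in_disk_count (l : ℝ) (hl : 0 < l) (R : ℝ) (hR : 0 ≤ R)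
    (p : EuclideanSpace ℝ (Fin 2)) (hp : p ∈ triLattice l) :
    ((triLattice l ∩ Metric.closedBall p R).ncard : ℤ) =
      (∑ i ∈ Finset.Icc (-⌊R / (Real.sqrt 3 * l)⌋) ⌊R / (Real.sqrt 3 * l)⌋,
        (1 + 2 * ⌊Real.sqrt (R ^ 2 - 3 * l ^ 2 * (i : ℝ) ^ 2) / (3 * l)⌋)) +
      4 * ∑ i ∈ Finset.Icc (0 : ℤ) ⌊R / (Real.sqrt 3 * l) - 1 / 2⌋,
        (1 + ⌊Real.sqrt (R ^ 2 - 3 * l ^ 2 * ((i : ℝ) + 1 / 2) ^ 2) / (3 * l) - 1 / 2⌋) := by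
  rw [geom l R hl hR p hp, even_card l R hl hR, odd_card l R hl hR]
end

section
/- Let l > 0 and let Λ(l) be the triangular lattice of side l in the plane. The union over all p ∈ Λ(l) of the closed disks of radius l centered at p is all of ℝ²; equivalently, every point of the plane lies within Euclidean distance l of some lattice point. (This expresses that placing a sensor of sensing radius R_s = l at the center of each hexagon of side l yields a complete coverage of the plane.) -/
lemma lemA (l x y r : ℝ) (hr : r ^ 2 = 3) (hx : 0 ≤ x) (hy : 0 ≤ y)
    (hy2 : y ≤ r / 2 * l) (hline : 3 * x + r * y ≤ 3 * l) : x ^ 2 + y ^ 2 ≤ l ^ 2 := by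
  nlinarith [sq_nonneg (3*l - 3*x - r*y), mul_nonneg hx (by linarith : (0:ℝ) ≤ 3*l - 3*x - r*y),
    mul_nonneg hy (by linarith : (0:ℝ) ≤ r/2*l - y)]

lemma dist_lattice (l : ℝ) (hl : 0 < l) (p : EuclideanSpace ℝ (Fin 2)) (m k : ℤ)
    (h : (p 0 - ((m : ℝ) + k) * (3 / 2 * l)) ^ 2
        + (p 1 - ((m : ℝ) - k) * (Real.sqrt 3 / 2 * l)) ^ 2 ≤ l ^ 2) :
    ∃ q ∈ triLattice l, dist p q ≤ l := by
  refine ⟨_, ⟨m, k, rfl⟩, ?_⟩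
  rw [EuclideanSpace.dist_eq]
  simp only [Real.dist_eq, sq_abs]
  have hcoord : ∀ i, ((m : ℝ) • pt (3 / 2 * l) (Real.sqrt 3 / 2 * l)
      + (k : ℝ) • pt (3 / 2 * l) (-(Real.sqrt 3 / 2 * l))) i
      = (m : ℝ) * (![3 / 2 * l, Real.sqrt 3 / 2 * l] i)
        + (k : ℝ) * (![3 / 2 * l, -(Real.sqrt 3 / 2 * l)] i) := by
    intro i
    simp [pt, WithLp.equiv_symm_apply]
  calc Real.sqrt (∑ i, (p i - ((m : ℝ) • pt (3 / 2 * l) (Real.sqrt 3 / 2 * l)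
      + (k : ℝ) • pt (3 / 2 * l) (-(Real.sqrt 3 / 2 * l))) i) ^ 2)
      ≤ Real.sqrt (l ^ 2) := by
        apply Real.sqrt_le_sqrt
        rw [Fin.sum_univ_two, hcoord, hcoord]
        simp only [Matrix.cons_val_zero, Matrix.cons_val_one, Matrix.head_cons]
        nlinarith [h]
    _ = l := by rw [Real.sqrt_sq hl.le]

/-- The closed disks of radius `l` centered at the points of the triangular lattice of
side `l > 0` cover the whole plane: every point of the plane lies within Euclidean
distance `l` of some lattice point. -/
theorem triLattice_covers_plane (l : ℝ) (hl : 0 < l) :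
    (⋃ p ∈ triLattice l, Metric.closedBall p l) = Set.univ := by
  apply Set.eq_univ_of_forall
  intro p
  have hr : (Real.sqrt 3) ^ 2 = 3 := Real.sq_sqrt (by norm_num)
  have hr0 : 0 < Real.sqrt 3 := Real.sqrt_pos.2 (by norm_num)
  set r := Real.sqrt 3 with hrdef
  set a := p 0 with ha
  set b := p 1 with hb
  have hc1 : (0:ℝ) < r / 2 * l := by positivity
  have hc2 : (0:ℝ) < 3 * l := by linarith
  set d : ℤ := ⌊b / (r / 2 * l)⌋ with hd
  set n : ℤ := ⌊(a - 3 / 2 * l * d) / (3 * l)⌋ with hn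
  set y : ℝ := b - r / 2 * l * d with hydef
  set x : ℝ := a - 3 / 2 * l * d - 3 * l * n with hxdef
  have hy0 : 0 ≤ y := by
    have h1 : (d : ℝ) ≤ b / (r / 2 * l) := Int.floor_le _
    have h2 := (le_div_iff₀ hc1).1 h1
    rw [hydef]; linarith
  have hy1 : y ≤ r / 2 * l := by
    have h1 : b / (r / 2 * l) < (d : ℝ) + 1 := Int.lt_floor_add_one _
    have h2 := (div_lt_iff₀ hc1).1 h1
    rw [hydef]; nlinarith
  have hx0 : 0 ≤ x := by
    have h1 : (n : ℝ) ≤ (a - 3 / 2 * l * d) / (3 * l) := Int.floor_le _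
    have h2 := (le_div_iff₀ hc2).1 h1
    rw [hxdef]; linarith
  have hx1 : x ≤ 3 * l := by
    have h1 : (a - 3 / 2 * l * d) / (3 * l) < (n : ℝ) + 1 := Int.lt_floor_add_one _
    have h2 := (div_lt_iff₀ hc2).1 h1
    rw [hxdef]; nlinarith
  clear_value x y n d
  have main : ∃ q ∈ triLattice l, dist p q ≤ l := by
    rcases le_or_gt (3 * x + r * y) (3 * l) with hcase | hcase
    · -- candidate A
      have hA := lemA l x y r hr hx0 hy0 hy1 hcase
      apply dist_lattice l hl p (d + n) n
      push_cast
      have he : (a - ((d : ℝ) + n + n) * (3 / 2 * l)) ^ 2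
          + (b - ((d : ℝ) + n - n) * (r / 2 * l)) ^ 2 = x ^ 2 + y ^ 2 := by
        rw [hxdef, hydef]; ring
      rw [he]; exact hA
    · rcases le_or_gt x (3 / 2 * l) with hx2 | hx2
      · -- candidate C
        have hC := lemA l (3 / 2 * l - x) (r / 2 * l - y) r hr (by linarith) (by linarith)
          (by linarith) (by nlinarith)
        apply dist_lattice l hl p (d + n + 1) n
        push_cast
        have he : (a - ((d : ℝ) + n + 1 + n) * (3 / 2 * l)) ^ 2
            + (b - ((d : ℝ) + n + 1 - n) * (r / 2 * l)) ^ 2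
            = (3 / 2 * l - x) ^ 2 + (r / 2 * l - y) ^ 2 := by
          rw [hxdef, hydef]; ring
        rw [he]; exact hC
      · rcases le_or_gt (3 * (3 * l - x) + r * y) (3 * l) with hcase2 | hcase2
        · -- candidate B
          have hB := lemA l (3 * l - x) y r hr (by linarith) hy0 hy1 hcase2
          apply dist_lattice l hl p (d + n + 1) (n + 1)
          push_cast
          have he : (a - ((d : ℝ) + n + 1 + (n + 1)) * (3 / 2 * l)) ^ 2
              + (b - ((d : ℝ) + n + 1 - (n + 1)) * (r / 2 * l)) ^ 2
              = (3 * l - x) ^ 2 + y ^ 2 := by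
            rw [hxdef, hydef]; ring
          rw [he]; exact hB
        · -- candidate C (from the right)
          have hC := lemA l (x - 3 / 2 * l) (r / 2 * l - y) r hr (by linarith) (by linarith)
            (by linarith) (by nlinarith)
          apply dist_lattice l hl p (d + n + 1) n
          push_cast
          have he : (a - ((d : ℝ) + n + 1 + n) * (3 / 2 * l)) ^ 2
              + (b - ((d : ℝ) + n + 1 - n) * (r / 2 * l)) ^ 2
              = (x - 3 / 2 * l) ^ 2 + (r / 2 * l - y) ^ 2 := by
            rw [hxdef, hydef]; ring
          rw [he]; exact hC
  obtain ⟨q, hq, hdq⟩ := main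
  exact Set.mem_biUnion hq (Metric.mem_closedBall.2 hdq)
end

section
/- Let l > 0, R_s ≥ 0, and let Λ(l) be the triangular lattice of side l in the plane. Every point p ∈ Λ(l) lies within Euclidean distance R_s of at least k lattice points of Λ(l) (counting p itself), where k = n(R_s) is the number of lattice points in the closed disk of radius R_s centered at a lattice point, given by n(R_s) = Σ_{i = -⌊R_s/(√3 l)⌋}^{⌊R_s/(√3 l)⌋} (1 + 2⌊√(R_s² − 3l²i²)/(3l)⌋) + 4 Σ_{i = 0}^{⌊R_s/(√3 l) − 1/2⌋} (1 + ⌊√(R_s² − 3l²(i + 1/2)²)/(3l) − 1/2⌋). (This expresses that a lattice deployment of sensors of sensing radius R_s achieves a grid coverage level of k = n(R_s).) -/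
/-- `ee l (s, d)` is the point `((3/2)·l·s, (√3/2)·l·d)`. -/
noncomputable def ee (l : ℝ) (sd : ℤ × ℤ) : EuclideanSpace ℝ (Fin 2) :=
  pt (3 * l * sd.1 / 2) (Real.sqrt 3 * l * sd.2 / 2)

lemma norm_ee (l : ℝ) (sd : ℤ × ℤ) :
    ‖ee l sd‖ = Real.sqrt ((3*l*sd.1/2)^2 + (Real.sqrt 3*l*sd.2/2)^2) := by
  simp [ee, pt, EuclideanSpace.norm_eq, Fin.sum_univ_two, Real.norm_eq_abs, sq_abs]

lemma ee_key (l : ℝ) (m k : ℤ) :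
    (m : ℝ) • pt (3 / 2 * l) (Real.sqrt 3 / 2 * l)
      + (k : ℝ) • pt (3 / 2 * l) (-(Real.sqrt 3 / 2 * l)) = ee l (m + k, m - k) := by
  ext i
  fin_cases i <;> · simp [pt, ee]; ring

lemma ee_add (l : ℝ) (x y : ℤ × ℤ) : ee l x + ee l y = ee l (x + y) := by
  ext i
  fin_cases i <;> · simp [pt, ee]; ring

lemma ee_mem (l : ℝ) (s d : ℤ) (h : Even (s + d)) : ee l (s, d) ∈ triLattice l := by
  obtain ⟨c, hc⟩ := h
  refine ⟨c, c - d, ?_⟩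
  rw [ee_key]
  have : (s, d) = (c + (c-d), c - (c-d)) := by simp [Prod.ext_iff]; omega
  rw [this]

lemma mem_ee {l : ℝ} {p : EuclideanSpace ℝ (Fin 2)} (hp : p ∈ triLattice l) :
    ∃ s d : ℤ, Even (s + d) ∧ p = ee l (s, d) := by
  obtain ⟨m, k, hmk⟩ := hp
  exact ⟨m + k, m - k, ⟨m, by ring⟩, by rw [hmk, ee_key]⟩

lemma ee_inj {l : ℝ} (hl : l ≠ 0) : Function.Injective (ee l) := by
  rintro ⟨s, d⟩ ⟨s', d'⟩ h
  have h0 := congrArg (fun x => x 0) h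
  have h1 := congrArg (fun x => x 1) h
  simp [ee, pt, hl] at h0 h1
  replace h0 : (3:ℝ) * l * s / 2 = 3 * l * s' / 2 := by rw [h0]
  replace h1 : Real.sqrt 3 * l * d / 2 = Real.sqrt 3 * l * d' / 2 := by rw [h1]
  have hs : (s : ℝ) = s' := by
    have h2 : (3:ℝ) * l * s = 3 * l * s' := by linarith
    exact mul_left_cancel₀ (mul_ne_zero (by norm_num) hl) h2
  have hd : (d : ℝ) = d' := by
    have h2 : Real.sqrt 3 * l * d = Real.sqrt 3 * l * d' := by linarith
    exact mul_left_cancel₀ (mul_ne_zero (by positivity) hl) h2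
  simp only [Prod.mk.injEq]
  exact ⟨by exact_mod_cast hs, by exact_mod_cast hd⟩

lemma evenBound (l Rs : ℝ) (hl : 0 < l) (hRs : 0 ≤ Rs) (j a : ℤ)
    (hj1 : (j:ℝ) ≤ Rs / (Real.sqrt 3 * l)) (hj2 : -(Rs / (Real.sqrt 3 * l)) ≤ (j:ℝ))
    (ha1 : (a:ℝ) ≤ Real.sqrt (Rs^2 - 3*l^2*(j:ℝ)^2) / (3*l))
    (ha2 : -(Real.sqrt (Rs^2 - 3*l^2*(j:ℝ)^2) / (3*l)) ≤ (a:ℝ)) :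
    (3*l*((2*a : ℤ):ℝ)/2)^2 + (Real.sqrt 3*l*((2*j : ℤ):ℝ)/2)^2 ≤ Rs^2 := by
  have hs3 : Real.sqrt 3 * Real.sqrt 3 = 3 := Real.mul_self_sqrt (by norm_num)
  have hs3l : (0:ℝ) < Real.sqrt 3 * l := by positivity
  have hl3 : (0:ℝ) < 3 * l := by linarith
  have ht1 : (j:ℝ) * (Real.sqrt 3 * l) ≤ Rs := (le_div_iff₀ hs3l).mp hj1
  have ht2 : -Rs ≤ (j:ℝ) * (Real.sqrt 3 * l) := by
    rw [← neg_div] at hj2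
    have := (div_le_iff₀ hs3l).mp hj2
    linarith
  have hX : 0 ≤ Rs^2 - 3*l^2*(j:ℝ)^2 := by
    nlinarith [mul_nonneg (by linarith : (0:ℝ) ≤ Rs - (j:ℝ)*(Real.sqrt 3*l))
      (by linarith : (0:ℝ) ≤ Rs + (j:ℝ)*(Real.sqrt 3*l)), hs3]
  have hsq : Real.sqrt (Rs^2 - 3*l^2*(j:ℝ)^2) * Real.sqrt (Rs^2 - 3*l^2*(j:ℝ)^2)
      = Rs^2 - 3*l^2*(j:ℝ)^2 := Real.mul_self_sqrt hX
  have ht3 : (a:ℝ) * (3*l) ≤ Real.sqrt (Rs^2 - 3*l^2*(j:ℝ)^2) := (le_div_iff₀ hl3).mp ha1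
  have ht4 : -Real.sqrt (Rs^2 - 3*l^2*(j:ℝ)^2) ≤ (a:ℝ) * (3*l) := by
    rw [← neg_div] at ha2
    have := (div_le_iff₀ hl3).mp ha2
    linarith
  have key : ((a:ℝ)*(3*l))^2 ≤ Rs^2 - 3*l^2*(j:ℝ)^2 := by
    nlinarith [mul_nonneg
      (by linarith : (0:ℝ) ≤ Real.sqrt (Rs^2 - 3*l^2*(j:ℝ)^2) - (a:ℝ)*(3*l))
      (by linarith : (0:ℝ) ≤ Real.sqrt (Rs^2 - 3*l^2*(j:ℝ)^2) + (a:ℝ)*(3*l)), hsq]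
  push_cast
  nlinarith [key, hs3]

lemma oddBound (l Rs : ℝ) (hl : 0 < l) (hRs : 0 ≤ Rs) (i a : ℤ) (hi0 : 0 ≤ i) (ha0 : 0 ≤ a)
    (hi1 : (i:ℝ) ≤ Rs / (Real.sqrt 3 * l) - 1/2)
    (ha1 : (a:ℝ) ≤ Real.sqrt (Rs^2 - 3*l^2*((i:ℝ)+1/2)^2) / (3*l) - 1/2) (s d : ℤ)
    (hs : s = 2*a+1 ∨ s = -(2*a+1)) (hd : d = 2*i+1 ∨ d = -(2*i+1)) :
    (3*l*(s:ℝ)/2)^2 + (Real.sqrt 3*l*(d:ℝ)/2)^2 ≤ Rs^2 := by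
  have hs3 : Real.sqrt 3 * Real.sqrt 3 = 3 := Real.mul_self_sqrt (by norm_num)
  have hs3l : (0:ℝ) < Real.sqrt 3 * l := by positivity
  have hl3 : (0:ℝ) < 3 * l := by linarith
  have hi0' : (0:ℝ) ≤ (i:ℝ) := by exact_mod_cast hi0
  have ha0' : (0:ℝ) ≤ (a:ℝ) := by exact_mod_cast ha0
  have hIm : (0:ℝ) ≤ ((i:ℝ)+1/2)*(Real.sqrt 3*l) := mul_nonneg (by linarith) hs3l.le
  have ht1 : ((i:ℝ)+1/2) * (Real.sqrt 3 * l) ≤ Rs := by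
    have : (i:ℝ)+1/2 ≤ Rs / (Real.sqrt 3 * l) := by linarith
    exact (le_div_iff₀ hs3l).mp this
  have hX : 0 ≤ Rs^2 - 3*l^2*((i:ℝ)+1/2)^2 := by
    nlinarith [mul_nonneg (by linarith : (0:ℝ) ≤ Rs - ((i:ℝ)+1/2)*(Real.sqrt 3*l))
      (by linarith : (0:ℝ) ≤ Rs + ((i:ℝ)+1/2)*(Real.sqrt 3*l)), hs3]
  have hsq := Real.mul_self_sqrt hX
  have hsn := Real.sqrt_nonneg (Rs^2 - 3*l^2*((i:ℝ)+1/2)^2)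
  have hAm : (0:ℝ) ≤ ((a:ℝ)+1/2)*(3*l) := mul_nonneg (by linarith) hl3.le
  have ht3 : ((a:ℝ)+1/2) * (3*l) ≤ Real.sqrt (Rs^2 - 3*l^2*((i:ℝ)+1/2)^2) := by
    have : (a:ℝ)+1/2 ≤ Real.sqrt (Rs^2 - 3*l^2*((i:ℝ)+1/2)^2) / (3*l) := by linarith
    exact (le_div_iff₀ hl3).mp this
  have key : (((a:ℝ)+1/2)*(3*l))^2 ≤ Rs^2 - 3*l^2*((i:ℝ)+1/2)^2 := by
    nlinarith [mul_nonneg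
      (by linarith : (0:ℝ) ≤ Real.sqrt (Rs^2 - 3*l^2*((i:ℝ)+1/2)^2) - ((a:ℝ)+1/2)*(3*l))
      (by linarith : (0:ℝ) ≤ Real.sqrt (Rs^2 - 3*l^2*((i:ℝ)+1/2)^2) + ((a:ℝ)+1/2)*(3*l)), hsq]
  have hs2 : ((s:ℝ))^2 = (2*(a:ℝ)+1)^2 := by rcases hs with rfl|rfl <;> push_cast <;> ring
  have hd2 : ((d:ℝ))^2 = (2*(i:ℝ)+1)^2 := by rcases hd with rfl|rfl <;> push_cast <;> ring
  have expand : (3*l*(s:ℝ)/2)^2 + (Real.sqrt 3*l*(d:ℝ)/2)^2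
      = (3*l/2)^2 * ((s:ℝ))^2 + (Real.sqrt 3 * Real.sqrt 3) * ((l/2)^2 * ((d:ℝ))^2) := by ring
  rw [expand, hs2, hd2, hs3]
  nlinarith [key]

lemma ceilBound {l Rs : ℝ} (hl : 0 < l) (t : ℤ) (h1 : (t:ℝ)*l ≤ 2*Rs) (h2 : -(2*Rs) ≤ (t:ℝ)*l) :
    -⌈2*Rs/l⌉ ≤ t ∧ t ≤ ⌈2*Rs/l⌉ := by
  have hMle : 2*Rs/l ≤ ((⌈2*Rs/l⌉ : ℤ):ℝ) := Int.le_ceil _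
  rw [div_le_iff₀ hl] at hMle
  constructor
  · have h : -((⌈2*Rs/l⌉ : ℤ):ℝ) ≤ (t:ℝ) := by nlinarith
    exact_mod_cast h
  · have h : (t:ℝ) ≤ ((⌈2*Rs/l⌉ : ℤ):ℝ) := by nlinarith
    exact_mod_cast h

lemma absBound {u Rs : ℝ} (hRs : 0 ≤ Rs) (h : u^2 ≤ 4*Rs^2) : -(2*Rs) ≤ u ∧ u ≤ 2*Rs := by
  constructor <;> nlinarith [sq_nonneg (u - 2*Rs), sq_nonneg (u + 2*Rs), sq_nonneg u]

/-- A lattice deployment of sensors of sensing radius `Rs` achieves a grid coverage level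
of `k = n(Rs)`: every lattice point lies within Euclidean distance `Rs` of at least
`n(Rs)` lattice points (counting itself), where
`n(Rs) = Σ_{i=-⌊Rs/(√3 l)⌋}^{⌊Rs/(√3 l)⌋} (1 + 2⌊√(Rs² − 3l²i²)/(3l)⌋)
       + 4 Σ_{i=0}^{⌊Rs/(√3 l) − 1/2⌋} (1 + ⌊√(Rs² − 3l²(i+1/2)²)/(3l) − 1/2⌋)`. -/
theorem triLattice_grid_coverage_level (l : ℝ) (hl : 0 < l) (Rs : ℝ) (hRs : 0 ≤ Rs)
    (p : EuclideanSpace ℝ (Fin 2)) (hp : p ∈ triLattice l) :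
    (∑ i ∈ Finset.Icc (-⌊Rs / (Real.sqrt 3 * l)⌋) ⌊Rs / (Real.sqrt 3 * l)⌋,
        (1 + 2 * ⌊Real.sqrt (Rs ^ 2 - 3 * l ^ 2 * (i : ℝ) ^ 2) / (3 * l)⌋)) +
      4 * ∑ i ∈ Finset.Icc (0 : ℤ) ⌊Rs / (Real.sqrt 3 * l) - 1 / 2⌋,
        (1 + ⌊Real.sqrt (Rs ^ 2 - 3 * l ^ 2 * ((i : ℝ) + 1 / 2) ^ 2) / (3 * l) - 1 / 2⌋) ≤
      ((triLattice l ∩ Metric.closedBall p Rs).ncard : ℤ) := by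
  classical
  have hl3 : (0:ℝ) < 3 * l := by linarith
  have hs3 : Real.sqrt 3 * Real.sqrt 3 = 3 := Real.mul_self_sqrt (by norm_num)
  have hs3pos : (0:ℝ) < Real.sqrt 3 := by positivity
  have hs3l : (0:ℝ) < Real.sqrt 3 * l := by positivity
  set J : ℤ := ⌊Rs / (Real.sqrt 3 * l)⌋ with hJ
  set A : ℤ → ℤ := fun j => ⌊Real.sqrt (Rs ^ 2 - 3 * l ^ 2 * (j : ℝ) ^ 2) / (3 * l)⌋ with hA
  set I : ℤ := ⌊Rs / (Real.sqrt 3 * l) - 1 / 2⌋ with hI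
  set B : ℤ → ℤ := fun i => ⌊Real.sqrt (Rs ^ 2 - 3 * l ^ 2 * ((i : ℝ) + 1 / 2) ^ 2) / (3 * l) - 1 / 2⌋ with hB
  set F1 : Finset (ℤ × ℤ) := (Finset.Icc (-J) J).biUnion
      (fun j => (Finset.Icc (-(A j)) (A j)).image (fun a => (2*a, 2*j))) with hF1
  set F2 : Finset (ℤ × ℤ) := (Finset.Icc (0:ℤ) I).biUnion
      (fun i => (Finset.Icc (0:ℤ) (B i)).biUnion
        (fun a => ({(2*a+1, 2*i+1), (-(2*a+1), 2*i+1), (2*a+1, -(2*i+1)), (-(2*a+1), -(2*i+1))} : Finset (ℤ × ℤ)))) with hF2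
  -- nonnegativity facts
  have hAnn : ∀ j, 0 ≤ A j := fun j => Int.floor_nonneg.2 (by positivity)
  have hBnn : ∀ i, -1 ≤ B i := by
    intro i
    rw [hB]
    refine Int.le_floor.2 ?_
    have : 0 ≤ Real.sqrt (Rs ^ 2 - 3 * l ^ 2 * ((i : ℝ) + 1 / 2) ^ 2) / (3*l) := by positivity
    push_cast
    linarith
  -- cardinalities
  have hcard1 : (F1.card : ℤ) = ∑ j ∈ Finset.Icc (-J) J, (1 + 2 * A j) := by
    rw [hF1, Finset.card_biUnion]
    · push_cast
      refine Finset.sum_congr rfl fun j _ => ?_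
      rw [Finset.card_image_of_injective _ (fun a b h => by simpa using h)]
      rw [Int.card_Icc]
      have := hAnn j
      omega
    · intro x hx y hy hxy
      simp only [Finset.disjoint_left, Finset.mem_image]
      rintro z ⟨a, ha, rfl⟩ ⟨b, hb, hz⟩
      simp only [Prod.mk.injEq] at hz
      omega
  have hcard2 : (F2.card : ℤ) = 4 * ∑ i ∈ Finset.Icc (0:ℤ) I, (1 + B i) := by
    rw [hF2, Finset.card_biUnion]
    · rw [Finset.mul_sum]
      push_cast
      refine Finset.sum_congr rfl fun i hi => ?_
      rw [Finset.card_biUnion]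
      · have hone : ∀ a ∈ Finset.Icc (0:ℤ) (B i),
            (({(2*a+1, 2*i+1), (-(2*a+1), 2*i+1), (2*a+1, -(2*i+1)), (-(2*a+1), -(2*i+1))} : Finset (ℤ × ℤ))).card = 4 := by
          intro a ha
          have ha0 : 0 ≤ a := (Finset.mem_Icc.mp ha).1
          have hi0 : 0 ≤ i := (Finset.mem_Icc.mp hi).1
          rw [Finset.card_insert_of_notMem (by simp only [Finset.mem_insert, Finset.mem_singleton, Prod.mk.injEq]; push_neg; omega),
              Finset.card_insert_of_notMem (by simp only [Finset.mem_insert, Finset.mem_singleton, Prod.mk.injEq]; push_neg; omega),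
              Finset.card_insert_of_notMem (by simp only [Finset.mem_singleton, Prod.mk.injEq]; push_neg; omega),
              Finset.card_singleton]
        rw [Finset.sum_congr rfl hone, Finset.sum_const, Int.card_Icc, smul_eq_mul]
        have := hBnn i
        push_cast
        omega
      · intro a ha b hb hab
        have ha0 : 0 ≤ a := (Finset.mem_Icc.mp ha).1
        have hb0 : 0 ≤ b := (Finset.mem_Icc.mp hb).1
        have hi0 : 0 ≤ i := (Finset.mem_Icc.mp hi).1
        simp only [Finset.disjoint_left, Finset.mem_insert, Finset.mem_singleton]
        rintro z (rfl|rfl|rfl|rfl) hz2 <;>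
          · simp only [Prod.mk.injEq] at hz2; omega
    · intro x hx y hy hxy
      have hx0 : 0 ≤ x := (Finset.mem_Icc.mp hx).1
      have hy0 : 0 ≤ y := (Finset.mem_Icc.mp hy).1
      simp only [Finset.disjoint_left, Finset.mem_biUnion, Finset.mem_insert, Finset.mem_singleton]
      rintro z ⟨a, ha, (rfl|rfl|rfl|rfl)⟩ ⟨b, hb, hz2⟩ <;>
        · simp only [Prod.mk.injEq] at hz2; omega
  have hdisj : Disjoint F1 F2 := by
    rw [hF1, hF2]
    simp only [Finset.disjoint_left, Finset.mem_biUnion, Finset.mem_image,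
      Finset.mem_insert, Finset.mem_singleton]
    rintro z ⟨j, hj, a, ha, rfl⟩ ⟨i, hi, b, hb, hz2⟩
    rcases hz2 with hz2|hz2|hz2|hz2 <;>
      · simp only [Prod.mk.injEq] at hz2; omega
  -- every index gives a lattice point within distance Rs of p
  have hball : ∀ x : ℤ × ℤ, Even (x.1 + x.2) → ‖ee l x‖ ≤ Rs →
      p + ee l x ∈ triLattice l ∩ Metric.closedBall p Rs := by
    rintro ⟨s, d⟩ hev hn
    obtain ⟨s₀, d₀, hev₀, hP⟩ := mem_ee hp
    constructor
    · rw [hP, ee_add]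
      show ee l (s₀ + s, d₀ + d) ∈ _
      refine ee_mem l _ _ ?_
      obtain ⟨c1, h1⟩ := hev
      obtain ⟨c2, h2⟩ := hev₀
      exact ⟨c1 + c2, by omega⟩
    · simp only [Set.mem_setOf_eq, Metric.mem_closedBall]
      rw [dist_eq_norm, add_sub_cancel_left]
      exact hn
  have hsub : ∀ x ∈ F1 ∪ F2, p + ee l x ∈ triLattice l ∩ Metric.closedBall p Rs := by
    intro x hx
    rcases Finset.mem_union.mp hx with hx | hx
    · rw [hF1] at hx
      simp only [Finset.mem_biUnion, Finset.mem_image] at hx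
      obtain ⟨j, hj, a, ha, rfl⟩ := hx
      obtain ⟨hj1, hj2⟩ := Finset.mem_Icc.mp hj
      obtain ⟨ha1, ha2⟩ := Finset.mem_Icc.mp ha
      have hJle : (J:ℝ) ≤ Rs / (Real.sqrt 3 * l) := by rw [hJ]; exact Int.floor_le _
      have hAle : (A j : ℝ) ≤ Real.sqrt (Rs ^ 2 - 3 * l ^ 2 * (j : ℝ) ^ 2) / (3 * l) := by
        rw [hA]; exact Int.floor_le _
      refine hball _ ⟨a + j, by ring⟩ ?_
      rw [norm_ee]
      refine le_trans (Real.sqrt_le_sqrt ?_) (le_of_eq (Real.sqrt_sq hRs))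
      refine evenBound l Rs hl hRs j a ?_ ?_ ?_ ?_
      · have : (j:ℝ) ≤ (J:ℝ) := by exact_mod_cast hj2
        linarith
      · have : ((-J : ℤ):ℝ) ≤ (j:ℝ) := by exact_mod_cast hj1
        push_cast at this
        linarith
      · have : (a:ℝ) ≤ (A j : ℝ) := by exact_mod_cast ha2
        linarith
      · have : ((-(A j) : ℤ):ℝ) ≤ (a:ℝ) := by exact_mod_cast ha1
        push_cast at this
        linarith
    · rw [hF2] at hx
      simp only [Finset.mem_biUnion, Finset.mem_insert, Finset.mem_singleton] at hx
      obtain ⟨i, hi, a, ha, hm⟩ := hx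
      obtain ⟨hi1, hi2⟩ := Finset.mem_Icc.mp hi
      obtain ⟨ha1, ha2⟩ := Finset.mem_Icc.mp ha
      have hIle : (I:ℝ) ≤ Rs / (Real.sqrt 3 * l) - 1/2 := by rw [hI]; exact Int.floor_le _
      have hBle : (B i : ℝ) ≤ Real.sqrt (Rs ^ 2 - 3 * l ^ 2 * ((i : ℝ) + 1/2) ^ 2) / (3 * l) - 1/2 := by
        rw [hB]; exact Int.floor_le _
      have hi1' : (i:ℝ) ≤ Rs / (Real.sqrt 3 * l) - 1/2 := by
        have : (i:ℝ) ≤ (I:ℝ) := by exact_mod_cast hi2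
        linarith
      have ha1' : (a:ℝ) ≤ Real.sqrt (Rs^2 - 3*l^2*((i:ℝ)+1/2)^2) / (3*l) - 1/2 := by
        have : (a:ℝ) ≤ (B i : ℝ) := by exact_mod_cast ha2
        linarith
      have hnorm : ∀ s d : ℤ, (s = 2*a+1 ∨ s = -(2*a+1)) → (d = 2*i+1 ∨ d = -(2*i+1)) →
          ‖ee l (s, d)‖ ≤ Rs := by
        intro s d hs hd
        rw [norm_ee]
        refine le_trans (Real.sqrt_le_sqrt ?_) (le_of_eq (Real.sqrt_sq hRs))
        exact oddBound l Rs hl hRs i a hi1 ha1 hi1' ha1' s d hs hd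
      rcases hm with rfl|rfl|rfl|rfl
      · exact hball _ ⟨a + i + 1, by ring⟩ (hnorm _ _ (Or.inl rfl) (Or.inl rfl))
      · exact hball _ ⟨i - a, by ring⟩ (hnorm _ _ (Or.inr rfl) (Or.inl rfl))
      · exact hball _ ⟨a - i, by ring⟩ (hnorm _ _ (Or.inl rfl) (Or.inr rfl))
      · exact hball _ ⟨-(a + i + 1), by ring⟩ (hnorm _ _ (Or.inr rfl) (Or.inr rfl))
  -- the intersection is finite
  have hfin : (triLattice l ∩ Metric.closedBall p Rs).Finite := by
    obtain ⟨s₀, d₀, hev₀, hP⟩ := mem_ee hp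
    apply Set.Finite.subset (Set.Finite.image (fun sd : ℤ × ℤ => p + ee l sd)
      ((Set.finite_Icc (-⌈2*Rs/l⌉) ⌈2*Rs/l⌉).prod (Set.finite_Icc (-⌈2*Rs/l⌉) ⌈2*Rs/l⌉)))
    rintro q ⟨hqL, hqB⟩
    obtain ⟨s, d, hev, rfl⟩ := mem_ee hqL
    have heq : ee l (s, d) = p + ee l (s - s₀, d - d₀) := by
      rw [hP, ee_add]
      have : ((s₀, d₀) : ℤ×ℤ) + (s - s₀, d - d₀) = (s, d) := by
        simp only [Prod.mk_add_mk, Prod.mk.injEq]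
        omega
      rw [this]
    have hdist : ‖ee l (s - s₀, d - d₀)‖ ≤ Rs := by
      have h1 := Metric.mem_closedBall.mp hqB
      rw [heq, dist_eq_norm, add_sub_cancel_left] at h1
      exact h1
    rw [norm_ee] at hdist
    have hE : (3*l*((s - s₀ : ℤ):ℝ)/2)^2 + (Real.sqrt 3*l*((d - d₀ : ℤ):ℝ)/2)^2 ≤ Rs^2 := by
      have h0 : 0 ≤ (3*l*((s - s₀ : ℤ):ℝ)/2)^2 + (Real.sqrt 3*l*((d - d₀ : ℤ):ℝ)/2)^2 := by positivity
      nlinarith [Real.sq_sqrt h0, Real.sqrt_nonneg ((3*l*((s - s₀ : ℤ):ℝ)/2)^2 + (Real.sqrt 3*l*((d - d₀ : ℤ):ℝ)/2)^2), hdist]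
    have hs'sq : ((((s - s₀ : ℤ)):ℝ)*l)^2 ≤ 4*Rs^2 := by
      nlinarith [hE, sq_nonneg (Real.sqrt 3*l*((d - d₀ : ℤ):ℝ)/2)]
    have hd'sq : ((((d - d₀ : ℤ)):ℝ)*l)^2 ≤ 4*Rs^2 := by
      nlinarith [hE, hs3, sq_nonneg (3*l*((s - s₀ : ℤ):ℝ)/2)]
    obtain ⟨hb2, hb1⟩ := absBound hRs hs'sq
    obtain ⟨hb4, hb3⟩ := absBound hRs hd'sq
    obtain ⟨hs1, hs2⟩ := ceilBound hl _ hb1 hb2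
    obtain ⟨hd1, hd2⟩ := ceilBound hl _ hb3 hb4
    exact ⟨(s - s₀, d - d₀), ⟨Set.mem_Icc.mpr ⟨hs1, hs2⟩, Set.mem_Icc.mpr ⟨hd1, hd2⟩⟩, heq.symm⟩
  -- assemble
  have hinj : Function.Injective (fun sd => p + ee l sd) := by
    intro x y h
    exact ee_inj (ne_of_gt hl) (by simpa using add_left_cancel h)
  calc (∑ i ∈ Finset.Icc (-J) J, (1 + 2 * A i)) + 4 * ∑ i ∈ Finset.Icc (0:ℤ) I, (1 + B i)
      = ((F1.card + F2.card : ℕ) : ℤ) := by push_cast; rw [hcard1, hcard2]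
    _ = (((F1 ∪ F2).card : ℕ) : ℤ) := by rw [Finset.card_union_of_disjoint hdisj]
    _ = (((F1 ∪ F2).image (fun sd => p + ee l sd)).card : ℤ) := by
          rw [Finset.card_image_of_injective _ hinj]
    _ ≤ ((triLattice l ∩ Metric.closedBall p Rs).ncard : ℤ) := by
          have h1 : (((F1 ∪ F2).image (fun sd => p + ee l sd)) : Set (EuclideanSpace ℝ (Fin 2)))
              ⊆ triLattice l ∩ Metric.closedBall p Rs := by
            intro q hq
            simp only [Finset.coe_image, Set.mem_image, Finset.mem_coe] at hq
            obtain ⟨x, hx, rfl⟩ := hq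
            exact hsub x hx
          have h2 := Set.ncard_le_ncard h1 hfin
          rw [Set.ncard_coe_finset] at h2
          exact_mod_cast h2
end

section
/- Let s, q ∈ ℝ² and R > 0 with 0 < ‖q − s‖ ≤ R, and let ρ denote the rotation by angle π/3 about s. Then for every point x with ‖x − s‖ = R, at least two of the six points ρ^k(q), k = 0, 1, …, 5, satisfy ‖x − ρ^k(q)‖ ≤ R. (Six sensors at distance at most R from s, placed symmetrically under rotations by π/3 about s, jointly cover every point of the sensing circle of s at least twice.) -/
/-- Rotation of the plane by angle `θ` about the origin, the linear isometry with matrix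
`[[cos θ, −sin θ], [sin θ, cos θ]]`. -/
noncomputable def rot (θ : ℝ) (p : EuclideanSpace ℝ (Fin 2)) : EuclideanSpace ℝ (Fin 2) :=
  pt (Real.cos θ * p 0 - Real.sin θ * p 1) (Real.sin θ * p 0 + Real.cos θ * p 1)

/-- Rotation of the plane by angle `θ` about the point `s`. -/
noncomputable def rotAbout (s : EuclideanSpace ℝ (Fin 2)) (θ : ℝ)
    (p : EuclideanSpace ℝ (Fin 2)) : EuclideanSpace ℝ (Fin 2) :=
  s + rot θ (p - s)

@[simp] lemma pt_zero' (a b : ℝ) : pt a b 0 = a := rfl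
@[simp] lemma pt_one' (a b : ℝ) : pt a b 1 = b := rfl

lemma rot_rot (θ φ : ℝ) (p : EuclideanSpace ℝ (Fin 2)) :
    rot θ (rot φ p) = rot (θ + φ) p := by
  ext i
  fin_cases i <;>
    simp [rot, Real.cos_add, Real.sin_add] <;> ring

lemma rot_zero (p : EuclideanSpace ℝ (Fin 2)) : rot 0 p = p := by
  ext i; fin_cases i <;> simp [rot]

lemma rotAbout_iter (s : EuclideanSpace ℝ (Fin 2)) (θ : ℝ) (q : EuclideanSpace ℝ (Fin 2))
    (n : ℕ) : (rotAbout s θ)^[n] q = s + rot (n * θ) (q - s) := by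
  induction n with
  | zero => simp [rot_zero]
  | succ n ih =>
      rw [Function.iterate_succ_apply', ih, rotAbout, add_sub_cancel_left, rot_rot]
      congr 2
      push_cast
      ring

lemma norm_sq_eq' (p : EuclideanSpace ℝ (Fin 2)) : ‖p‖ ^ 2 = p 0 ^ 2 + p 1 ^ 2 := by
  rw [EuclideanSpace.norm_eq, Real.sq_sqrt (by positivity)]
  simp [Fin.sum_univ_two, sq_abs]

lemma cos_ge_half {t : ℝ} (h0 : -(Real.pi/3) ≤ t) (h1 : t ≤ Real.pi/3) :
    1/2 ≤ Real.cos t := by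
  rw [show (1/2 : ℝ) = Real.cos (Real.pi/3) from by rw [Real.cos_pi_div_three]]
  rcases le_or_gt 0 t with ht | ht
  · exact Real.cos_le_cos_of_nonneg_of_le_pi ht (by linarith [Real.pi_pos]) h1
  · rw [← Real.cos_neg t]
    exact Real.cos_le_cos_of_nonneg_of_le_pi (by linarith) (by linarith [Real.pi_pos])
      (by linarith)

set_option maxHeartbeats 1600000 in
/-- Six sensors of sensing radius `R` at distance at most `R` from `s` (and distinct
from `s`), placed symmetrically under rotations by `π/3` about `s`, jointly cover every
point of the sensing circle of `s` at least twice: for every `x` with `‖x − s‖ = R`,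
at least two of the six points `ρ^k(q)`, `k = 0, …, 5`, are within distance `R` of `x`. -/
theorem inner_crown_double_perimeter_coverage (s q : EuclideanSpace ℝ (Fin 2)) (R : ℝ)
    (hR : 0 < R) (hq : 0 < ‖q - s‖) (hqR : ‖q - s‖ ≤ R)
    (x : EuclideanSpace ℝ (Fin 2)) (hx : ‖x - s‖ = R) :
    2 ≤ {k : Fin 6 | ‖x - (rotAbout s (Real.pi / 3))^[(k : ℕ)] q‖ ≤ R}.ncard := by
  set r : ℝ := ‖q - s‖ with hr
  set u0 : ℝ := (x - s) 0
  set u1 : ℝ := (x - s) 1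
  set v0 : ℝ := (q - s) 0
  set v1 : ℝ := (q - s) 1
  have hu : u0 ^ 2 + u1 ^ 2 = R ^ 2 := by rw [← norm_sq_eq', hx]
  have hv : v0 ^ 2 + v1 ^ 2 = r ^ 2 := by rw [← norm_sq_eq']
  set A : ℝ := u0 * v0 + u1 * v1 with hA
  set B : ℝ := u1 * v0 - u0 * v1 with hB
  have hAB : A ^ 2 + B ^ 2 = (R * r) ^ 2 := by
    rw [hA, hB]; nlinarith [hu, hv]
  have hRr : 0 < R * r := mul_pos hR hq
  set z : ℂ := ⟨A, B⟩ with hz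
  have hzabs : ‖z‖ = R * r := by
    rw [Complex.norm_def, Complex.normSq_mk, show A * A + B * B = (R*r)^2 by nlinarith]
    exact Real.sqrt_sq hRr.le
  have hzne : z ≠ 0 := by
    intro h
    rw [h] at hzabs
    simp at hzabs
    rcases hzabs with h' | h' <;> linarith
  set α : ℝ := z.arg with hα
  have hcosα : A = R * r * Real.cos α := by
    rw [hα, Complex.cos_arg hzne, hzabs]
    field_simp [hz]
    rfl
  have hsinα : B = R * r * Real.sin α := by
    rw [hα, Complex.sin_arg, hzabs]
    field_simp [hz]
    rfl
  -- membership criterion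
  have key : ∀ k : Fin 6, 1/2 ≤ Real.cos (α - (k : ℕ) * (Real.pi/3)) →
      k ∈ {k : Fin 6 | ‖x - (rotAbout s (Real.pi / 3))^[(k : ℕ)] q‖ ≤ R} := by
    intro k hcos
    set θ : ℝ := (k : ℕ) * (Real.pi/3)
    have hit : (rotAbout s (Real.pi / 3))^[(k : ℕ)] q = s + rot θ (q - s) :=
      rotAbout_iter s _ q _
    simp only [Set.mem_setOf_eq, hit]
    have hcomp0 : (x - (s + rot θ (q - s))) 0
        = u0 - (Real.cos θ * v0 - Real.sin θ * v1) := by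
      simp [rot, u0, v0, v1, sub_eq_add_neg]
      ring
    have hcomp1 : (x - (s + rot θ (q - s))) 1
        = u1 - (Real.sin θ * v0 + Real.cos θ * v1) := by
      simp [rot, u1, v0, v1, sub_eq_add_neg]
      ring
    have hnsq : ‖x - (s + rot θ (q - s))‖ ^ 2
        = R ^ 2 + r ^ 2 - 2 * (A * Real.cos θ + B * Real.sin θ) := by
      rw [norm_sq_eq', hcomp0, hcomp1, hA, hB]
      have hpyth := Real.sin_sq_add_cos_sq θ
      linear_combination hu + hv + (v0 ^ 2 + v1 ^ 2) * hpyth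
    have hinner : A * Real.cos θ + B * Real.sin θ = R * r * Real.cos (α - θ) := by
      rw [hcosα, hsinα, Real.cos_sub]; ring
    have hcos2 : 1/2 ≤ Real.cos (α - θ) := hcos
    have hle : ‖x - (s + rot θ (q - s))‖ ^ 2 ≤ R ^ 2 := by
      rw [hnsq, hinner]
      nlinarith [hqR, hq, hcos2, hR]
    have hN : (0:ℝ) ≤ ‖x - (s + rot θ (q - s))‖ := norm_nonneg _
    have h2 := Real.sqrt_le_sqrt hle
    rwa [Real.sqrt_sq hN, Real.sqrt_sq hR.le] at h2
  -- choose the two good indices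
  clear_value u0 u1 v0 v1 A B z α
  have hπ : (0:ℝ) < Real.pi := Real.pi_pos
  set m : ℤ := ⌈3 * α / Real.pi⌉ - 1 with hm
  have hm1 : (m : ℝ) ≥ 3 * α / Real.pi - 1 := by
    have := Int.le_ceil (3 * α / Real.pi)
    push_cast [hm]
    linarith
  have hm2 : (m : ℝ) < 3 * α / Real.pi := by
    have := Int.ceil_lt_add_one (3 * α / Real.pi)
    push_cast [hm]
    linarith
  have hml : α - m * (Real.pi/3) ≤ Real.pi/3 := by
    have : (m : ℝ) * (Real.pi/3) ≥ (3 * α / Real.pi - 1) * (Real.pi/3) := by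
      apply mul_le_mul_of_nonneg_right hm1 (by positivity)
    have h2 : (3 * α / Real.pi - 1) * (Real.pi/3) = α - Real.pi/3 := by
      field_simp
    linarith
  have hmr : 0 < α - m * (Real.pi/3) := by
    have : (m : ℝ) * (Real.pi/3) < (3 * α / Real.pi) * (Real.pi/3) := by
      apply mul_lt_mul_of_pos_right hm2 (by positivity)
    have h2 : (3 * α / Real.pi) * (Real.pi/3) = α := by
      field_simp
    linarith
  -- define the two Fin 6 indices
  clear_value m
  have hk1lt : (m % 6).toNat < 6 := by omega
  have hk2lt : ((m + 1) % 6).toNat < 6 := by omega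
  set k1 : Fin 6 := ⟨(m % 6).toNat, hk1lt⟩ with hk1
  set k2 : Fin 6 := ⟨((m + 1) % 6).toNat, hk2lt⟩ with hk2
  have hkne : k1 ≠ k2 := by
    intro h
    have h' := congrArg Fin.val h
    simp only [hk1, hk2, Fin.val_mk] at h'
    omega
  have hcoseq : ∀ n : ℤ, 0 ≤ n % 6 →
      Real.cos (α - ((n % 6 : ℤ) : ℝ) * (Real.pi/3)) = Real.cos (α - n * (Real.pi/3)) := by
    intro n _
    have : ((n % 6 : ℤ) : ℝ) = (n : ℝ) - 6 * (n / 6 : ℤ) := by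
      push_cast [Int.emod_def]
      ring
    rw [this, show α - ((n:ℝ) - 6 * ((n / 6 : ℤ):ℝ)) * (Real.pi/3)
        = (α - n * (Real.pi/3)) + (n / 6 : ℤ) * (2 * Real.pi) by ring]
    exact Real.cos_add_int_mul_two_pi _ _
  have hmem1 : k1 ∈ {k : Fin 6 | ‖x - (rotAbout s (Real.pi / 3))^[(k : ℕ)] q‖ ≤ R} := by
    apply key
    have hcast : ((k1 : ℕ) : ℝ) = ((m % 6 : ℤ) : ℝ) := by
      have h : ((k1 : ℕ) : ℤ) = m % 6 := by
        simp only [hk1, Fin.val_mk]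
        omega
      exact_mod_cast congrArg (fun n : ℤ => (n : ℝ)) h
    rw [hcast, hcoseq m (by omega)]
    exact cos_ge_half (by linarith) (by linarith)
  have hmem2 : k2 ∈ {k : Fin 6 | ‖x - (rotAbout s (Real.pi / 3))^[(k : ℕ)] q‖ ≤ R} := by
    apply key
    have hcast : ((k2 : ℕ) : ℝ) = (((m + 1) % 6 : ℤ) : ℝ) := by
      have h : ((k2 : ℕ) : ℤ) = (m + 1) % 6 := by
        simp only [hk2, Fin.val_mk]
        omega
      exact_mod_cast congrArg (fun n : ℤ => (n : ℝ)) h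
    rw [hcast, hcoseq (m + 1) (by omega)]
    have : α - ((m : ℝ) + 1) * (Real.pi/3) = (α - m * (Real.pi/3)) - Real.pi/3 := by ring
    push_cast
    rw [this]
    exact cos_ge_half (by linarith) (by linarith)
  calc (2 : ℕ) = ({k1, k2} : Set (Fin 6)).ncard := (Set.ncard_pair hkne).symm
    _ ≤ _ := Set.ncard_le_ncard (by
        intro k hk
        rcases hk with h | h
        · exact h ▸ hmem1
        · exact h ▸ hmem2) (Set.toFinite _)
end

section
/- Let s, q ∈ ℝ² and R > 0 with √3·R < ‖q − s‖ ≤ 2R. If x and y are two points on the circle of radius R centered at s (‖x − s‖ = ‖y − s‖ = R) that both satisfy ‖x − q‖ ≤ R and ‖y − q‖ ≤ R, then ‖x − y‖ < R. (A sensor at distance strictly greater than √3 R from s covers only an arc of the sensing circle of s of amplitude less than π/3, so any two covered points of the circle are at distance less than the chord subtended by an angle π/3, namely R.) -/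
open scoped RealInnerProductSpace

private lemma far_sensor_arith (R D a b p : ℝ) (hR : 0 < R)
    (hd3 : 3 * R ^ 2 < D) (hd4 : D ≤ 4 * R ^ 2)
    (haL : D / 2 ≤ a) (hbL : D / 2 ≤ b)
    (hcsa : a * a ≤ R ^ 2 * D) (hcsb : b * b ≤ R ^ 2 * D)
    (hCS' : (D * p - a * b) * (D * p - a * b) ≤ (D * R ^ 2 - a * a) * (D * R ^ 2 - b * b)) :
    R ^ 2 / 2 < p := by
  have hd2pos : (0:ℝ) < D := by nlinarith
  rcases le_or_gt (a * b) (D * p) with hcase | hcase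
  · nlinarith
  · have hA : 0 ≤ D * R ^ 2 - a * a := by nlinarith
    have hB : 0 ≤ D * R ^ 2 - b * b := by nlinarith
    have hA' : D * R ^ 2 - a * a < D * R ^ 2 / 4 := by nlinarith
    have hB' : D * R ^ 2 - b * b < D * R ^ 2 / 4 := by nlinarith
    have hprod : (D * p - a * b) * (D * p - a * b) < (D * R ^ 2 / 4) * (D * R ^ 2 / 4) := by
      calc (D * p - a * b) * (D * p - a * b)
          ≤ (D * R ^ 2 - a * a) * (D * R ^ 2 - b * b) := hCS'
        _ < (D * R ^ 2 / 4) * (D * R ^ 2 / 4) := by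
            apply mul_lt_mul' (le_of_lt hA') hB' hB
            nlinarith
    have h1 : a * b - D * p < D * R ^ 2 / 4 := by nlinarith
    nlinarith

private lemma far_sensor_key {E : Type*} [NormedAddCommGroup E] [InnerProductSpace ℝ E]
    (u v w : E) (R : ℝ) (hR : 0 < R) (hu : ‖u‖ = R) (hv : ‖v‖ = R)
    (hd3 : 3 * R ^ 2 < ‖w‖ ^ 2) (hd4 : ‖w‖ ^ 2 ≤ 4 * R ^ 2)
    (huw : ‖u - w‖ ≤ R) (hvw : ‖v - w‖ ≤ R) : ‖u - v‖ < R := by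
  have hd2pos : (0:ℝ) < ‖w‖ ^ 2 := by nlinarith
  have ea : ‖u - w‖ ^ 2 = R ^ 2 - 2 * ⟪u, w⟫ + ‖w‖ ^ 2 := by
    rw [norm_sub_sq_real, hu]
  have eb : ‖v - w‖ ^ 2 = R ^ 2 - 2 * ⟪v, w⟫ + ‖w‖ ^ 2 := by
    rw [norm_sub_sq_real, hv]
  have huw2 : ‖u - w‖ ^ 2 ≤ R ^ 2 := by nlinarith [norm_nonneg (u - w)]
  have hvw2 : ‖v - w‖ ^ 2 ≤ R ^ 2 := by nlinarith [norm_nonneg (v - w)]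
  have haL : ‖w‖ ^ 2 / 2 ≤ ⟪u, w⟫ := by linarith [ea ▸ huw2]
  have hbL : ‖w‖ ^ 2 / 2 ≤ ⟪v, w⟫ := by linarith [eb ▸ hvw2]
  have hcsa : ⟪u, w⟫ * ⟪u, w⟫ ≤ R ^ 2 * ‖w‖ ^ 2 := by
    have h := real_inner_mul_inner_self_le u w
    rw [real_inner_self_eq_norm_sq, real_inner_self_eq_norm_sq, hu] at h
    exact h
  have hcsb : ⟪v, w⟫ * ⟪v, w⟫ ≤ R ^ 2 * ‖w‖ ^ 2 := by
    have h := real_inner_mul_inner_self_le v w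
    rw [real_inner_self_eq_norm_sq, real_inner_self_eq_norm_sq, hv] at h
    exact h
  -- Cauchy–Schwarz applied to the components of u, v orthogonal to w
  have hCS := real_inner_mul_inner_self_le
    (‖w‖ ^ 2 • u - ⟪u, w⟫ • w) (‖w‖ ^ 2 • v - ⟪v, w⟫ • w)
  have e1 : ⟪‖w‖ ^ 2 • u - ⟪u, w⟫ • w, ‖w‖ ^ 2 • v - ⟪v, w⟫ • w⟫
      = ‖w‖ ^ 2 * (‖w‖ ^ 2 * ⟪u, v⟫ - ⟪u, w⟫ * ⟪v, w⟫) := by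
    simp only [inner_sub_left, inner_sub_right, real_inner_smul_left, real_inner_smul_right]
    rw [real_inner_comm w v, real_inner_self_eq_norm_sq w]
    ring
  have e2 : ⟪‖w‖ ^ 2 • u - ⟪u, w⟫ • w, ‖w‖ ^ 2 • u - ⟪u, w⟫ • w⟫
      = ‖w‖ ^ 2 * (‖w‖ ^ 2 * R ^ 2 - ⟪u, w⟫ * ⟪u, w⟫) := by
    simp only [inner_sub_left, inner_sub_right, real_inner_smul_left, real_inner_smul_right]
    rw [real_inner_comm w u, real_inner_self_eq_norm_sq w, real_inner_self_eq_norm_sq u, hu]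
    ring
  have e3 : ⟪‖w‖ ^ 2 • v - ⟪v, w⟫ • w, ‖w‖ ^ 2 • v - ⟪v, w⟫ • w⟫
      = ‖w‖ ^ 2 * (‖w‖ ^ 2 * R ^ 2 - ⟪v, w⟫ * ⟪v, w⟫) := by
    simp only [inner_sub_left, inner_sub_right, real_inner_smul_left, real_inner_smul_right]
    rw [real_inner_comm w v, real_inner_self_eq_norm_sq w, real_inner_self_eq_norm_sq v, hv]
    ring
  rw [e1, e2, e3] at hCS
  set D := ‖w‖ ^ 2 with hD
  set a := ⟪u, w⟫ with ha
  set b := ⟪v, w⟫ with hb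
  set p := ⟪u, v⟫ with hp
  have hDD : (0:ℝ) < D * D := by positivity
  have h' : D * D * ((D * p - a * b) * (D * p - a * b))
      ≤ D * D * ((D * R ^ 2 - a * a) * (D * R ^ 2 - b * b)) := by linear_combination hCS
  have hCS' : (D * p - a * b) * (D * p - a * b)
      ≤ (D * R ^ 2 - a * a) * (D * R ^ 2 - b * b) := (mul_le_mul_iff_right₀ hDD).mp h'
  have hkey : R ^ 2 / 2 < p := far_sensor_arith R D a b p hR hd3 hd4 haL hbL hcsa hcsb hCS'
  have hfin : ‖u - v‖ ^ 2 < R ^ 2 := by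
    rw [norm_sub_sq_real, hu, hv, ← hp]
    linarith
  nlinarith [norm_nonneg (u - v), hfin]

/-- A sensor at distance strictly greater than `√3 R` (and at most `2R`) from `s` covers
only an arc of the sensing circle of `s` of amplitude less than `π/3`: any two points of
the circle of radius `R` centered at `s` that are both within distance `R` of `q` are at
distance less than `R` from each other. -/
theorem far_sensor_covers_short_arc (s q : EuclideanSpace ℝ (Fin 2)) (R : ℝ) (hR : 0 < R)
    (hq : Real.sqrt 3 * R < ‖q - s‖) (hq2 : ‖q - s‖ ≤ 2 * R)
    (x y : EuclideanSpace ℝ (Fin 2)) (hx : ‖x - s‖ = R) (hy : ‖y - s‖ = R)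
    (hxq : ‖x - q‖ ≤ R) (hyq : ‖y - q‖ ≤ R) :
    ‖x - y‖ < R := by
  have huw : (x - s) - (q - s) = x - q := by abel
  have hvw : (y - s) - (q - s) = y - q := by abel
  have huv : (x - s) - (y - s) = x - y := by abel
  have hd3 : 3 * R ^ 2 < ‖q - s‖ ^ 2 := by
    have h3 : Real.sqrt 3 * Real.sqrt 3 = 3 := Real.mul_self_sqrt (by norm_num)
    have h0 : (0:ℝ) ≤ Real.sqrt 3 * R := by positivity
    nlinarith [mul_self_lt_mul_self h0 hq, h3]
  have hd4 : ‖q - s‖ ^ 2 ≤ 4 * R ^ 2 := by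
    nlinarith [norm_nonneg (q - s), hq2, hR]
  have := far_sensor_key (x - s) (y - s) (q - s) R hR hx hy hd3 hd4
    (by rw [huw]; exact hxq) (by rw [hvw]; exact hyq)
  rwa [huv] at this
end

section
/- Let n ∈ ℕ, let id : Fin n → ℕ, and let s, s' : Fin n → ℕ be two network states. Suppose there are indices x ≠ y such that s'(x) = s(x) − 1, s'(y) = s(y) + 1, s'(i) = s(i) for all i ∉ {x, y}, and the Moving Condition holds, i.e. either s(x) > s(y) + 1, or s(x) = s(y) + 1 and id(x) > id(y). Then f(s') is strictly smaller than f(s) in the lexicographic order on ℕ × ℕ, where f(t) = (Σ_{i} t(i)², Σ_{i} t(i)·id(i)). -/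
/-- The potential function on network states:
`f(t) = (Σ_i t(i)², Σ_i t(i)·id(i))`, compared in the lexicographic order on `ℕ × ℕ`. -/
def potential {n : ℕ} (idf : Fin n → ℕ) (s : Fin n → ℕ) : ℕ × ℕ :=
  (∑ i, s i ^ 2, ∑ i, s i * idf i)

lemma sum_swap_aux {n : ℕ} (x y : Fin n) (hxy : x ≠ y) (g g' : Fin n → ℕ)
    (h : ∀ i, i ≠ x → i ≠ y → g' i = g i) :
    (∑ i, g' i) + g x + g y = (∑ i, g i) + g' x + g' y := by
  classical
  have hx : x ∈ (Finset.univ : Finset (Fin n)) := Finset.mem_univ x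
  have hy' : y ∈ (Finset.univ : Finset (Fin n)).erase x :=
    Finset.mem_erase.mpr ⟨Ne.symm hxy, Finset.mem_univ y⟩
  have key : ∀ f : Fin n → ℕ,
      (∑ i, f i) = f x + (f y + ∑ i ∈ ((Finset.univ.erase x).erase y), f i) := by
    intro f
    rw [← Finset.add_sum_erase _ f hx, ← Finset.add_sum_erase _ f hy']
  rw [key g, key g']
  have : ∑ i ∈ ((Finset.univ.erase x).erase y), g' i
       = ∑ i ∈ ((Finset.univ.erase x).erase y), g i := by
    apply Finset.sum_congr rfl
    intro i hi
    simp only [Finset.mem_erase] at hi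
    exact h i hi.2.1 hi.1
  omega

/-- A state change moving one sensor from hexagon `x` to hexagon `y ≠ x`, allowed by the
Moving Condition `(s x > s y + 1) ∨ (s x = s y + 1 ∧ id x > id y)`, strictly decreases
the potential `f(t) = (Σ_i t(i)², Σ_i t(i)·id(i))` in the lexicographic order. -/
theorem potential_decreases {n : ℕ} (idf : Fin n → ℕ) (s s' : Fin n → ℕ) (x y : Fin n)
    (hxy : x ≠ y)
    (hx : s' x = s x - 1) (hy : s' y = s y + 1)
    (hother : ∀ i, i ≠ x → i ≠ y → s' i = s i)
    (hmc : s x > s y + 1 ∨ (s x = s y + 1 ∧ idf x > idf y)) :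
    Prod.Lex (· < ·) (· < ·) (potential idf s') (potential idf s) := by
  have ha : s y + 1 ≤ s x := by rcases hmc with h | ⟨h, _⟩ <;> omega
  obtain ⟨c, hc⟩ : ∃ c, s x = c + 1 := ⟨s x - 1, by omega⟩
  have hsq := sum_swap_aux x y hxy (fun i => s i ^ 2) (fun i => s' i ^ 2)
    (fun i hix hiy => by simp [hother i hix hiy])
  have hid := sum_swap_aux x y hxy (fun i => s i * idf i) (fun i => s' i * idf i)
    (fun i hix hiy => by simp [hother i hix hiy])
  simp only [hx, hy, hc] at hsq hid
  simp only [Nat.add_sub_cancel] at hsq hid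
  unfold potential
  rcases hmc with h | ⟨h, hidxy⟩
  · apply Prod.Lex.left
    have hb : s y < c := by omega
    nlinarith [hsq]
  · have hcb : c = s y := by omega
    subst hcb
    have heq : (∑ i, s' i ^ 2) = ∑ i, s i ^ 2 := by nlinarith [hsq]
    rw [heq]
    apply Prod.Lex.right
    nlinarith [hid]
end

section
/- Let n ∈ ℕ and let id : Fin n → ℕ. There is no infinite sequence of network states σ : ℕ → (Fin n → ℕ) such that for every t ∈ ℕ there exist indices x ≠ y with σ(t+1)(x) = σ(t)(x) − 1, σ(t+1)(y) = σ(t)(y) + 1, σ(t+1)(i) = σ(t)(i) for all i ∉ {x, y}, and the Moving Condition holding in state σ(t), i.e. either σ(t)(x) > σ(t)(y) + 1, or σ(t)(x) = σ(t)(y) + 1 and id(x) > id(y). Consequently any maximal sequence of such state changes is finite, so a stable state (one in which the Moving Condition fails for every pair of indices) is reached after finitely many steps. -/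
private lemma move_sum {n : ℕ} (s s' : Fin n → ℕ) (x y : Fin n) (hxy : x ≠ y)
    (hoff : ∀ i, i ≠ x → i ≠ y → s' i = s i) (f : Fin n → ℕ → ℕ) :
    (∑ i, f i (s' i)) + f x (s x) + f y (s y)
      = (∑ i, f i (s i)) + f x (s' x) + f y (s' y) := by
  have hxmem : x ∈ Finset.univ.erase y := Finset.mem_erase.2 ⟨hxy, Finset.mem_univ x⟩
  have key : ∀ g : Fin n → ℕ,
      (∑ i, f i (g i))
        = (∑ i ∈ (Finset.univ.erase y).erase x, f i (g i)) + f x (g x) + f y (g y) := by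
    intro g
    have h1 := Finset.sum_erase_add Finset.univ (fun i => f i (g i)) (Finset.mem_univ y)
    have h2 := Finset.sum_erase_add (Finset.univ.erase y) (fun i => f i (g i)) hxmem
    omega
  have hcore : (∑ i ∈ (Finset.univ.erase y).erase x, f i (s' i))
      = ∑ i ∈ (Finset.univ.erase y).erase x, f i (s i) := by
    refine Finset.sum_congr rfl fun i hi => ?_
    rw [Finset.mem_erase, Finset.mem_erase] at hi
    rw [hoff i hi.1 hi.2.1]
  rw [key s, key s', hcore]
  omega

/-- Termination of Push & Pull: there is no infinite sequence of network states in which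
every step moves one sensor from some hexagon `x` to another hexagon `y ≠ x` under the
Moving Condition `(s x > s y + 1) ∨ (s x = s y + 1 ∧ id x > id y)`.  Consequently any
maximal sequence of such state changes is finite and a stable state is reached after
finitely many steps. -/
theorem no_infinite_moving_sequence (n : ℕ) (idf : Fin n → ℕ) :
    ¬ ∃ σ : ℕ → (Fin n → ℕ), ∀ t : ℕ, ∃ x y : Fin n, x ≠ y ∧
        σ (t + 1) x = σ t x - 1 ∧
        σ (t + 1) y = σ t y + 1 ∧
        (∀ i, i ≠ x → i ≠ y → σ (t + 1) i = σ t i) ∧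
        (σ t x > σ t y + 1 ∨ (σ t x = σ t y + 1 ∧ idf x > idf y)) := by
  rintro ⟨σ, h⟩
  set C : ℕ := (∑ i, idf i) * (∑ i, σ 0 i) + 1 with hC
  -- the total number of sensors is invariant
  have hS : ∀ t, (∑ i, σ t i) = ∑ i, σ 0 i := by
    intro t
    induction t with
    | zero => rfl
    | succ t ih =>
      obtain ⟨x, y, hxy, hx, hy, hoff, hcond⟩ := h t
      have ha1 : σ t y + 1 ≤ σ t x := by rcases hcond with h1 | h1 <;> omega
      have := move_sum (σ t) (σ (t+1)) x y hxy hoff (fun _ v => v)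
      omega
  -- the weighted sum is uniformly bounded by C
  have hwid : ∀ t, (∑ i, idf i * σ t i) < C := by
    intro t
    have hb : ∀ i ∈ Finset.univ, idf i * σ t i ≤ idf i * (∑ j, σ 0 j) := by
      intro i _
      refine Nat.mul_le_mul_left _ ?_
      rw [← hS t]
      exact Finset.single_le_sum (fun j _ => Nat.zero_le _) (Finset.mem_univ i)
    calc (∑ i, idf i * σ t i) ≤ ∑ i, idf i * (∑ j, σ 0 j) := Finset.sum_le_sum hb
      _ = (∑ i, idf i) * (∑ j, σ 0 j) := by rw [Finset.sum_mul]
      _ < C := by omega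
  set m : ℕ → ℕ := fun t => C * (∑ i, σ t i * σ t i) + (∑ i, idf i * σ t i) with hm
  have hdec : ∀ t, m (t+1) < m t := by
    intro t
    obtain ⟨x, y, hxy, hx, hy, hoff, hcond⟩ := h t
    have ha1 : σ t y + 1 ≤ σ t x := by rcases hcond with h1 | h1 <;> omega
    have hx' : σ (t+1) x + 1 = σ t x := by omega
    have eq1 := move_sum (σ t) (σ (t+1)) x y hxy hoff (fun _ v => v * v)
    have eq2 := move_sum (σ t) (σ (t+1)) x y hxy hoff (fun i v => idf i * v)
    rcases hcond with hgt | ⟨heq, hid⟩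
    · -- far move: sum of squares strictly decreases
      have hb' : σ t y + 1 ≤ σ (t+1) x := by omega
      rw [hy, ← hx'] at eq1
      have hsq : (∑ i, σ (t+1) i * σ (t+1) i) < ∑ i, σ t i * σ t i := by
        nlinarith [eq1, hb']
      have h2 := hwid (t+1)
      have h0 : 1 ≤ C := by omega
      calc m (t+1) = C * (∑ i, σ (t+1) i * σ (t+1) i) + (∑ i, idf i * σ (t+1) i) := rfl
        _ < C * (∑ i, σ (t+1) i * σ (t+1) i) + C := by omega
        _ = C * ((∑ i, σ (t+1) i * σ (t+1) i) + 1) := by ring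
        _ ≤ C * (∑ i, σ t i * σ t i) := Nat.mul_le_mul_left _ hsq
        _ ≤ m t := Nat.le_add_right _ _
    · -- swap move: sum of squares unchanged, weighted sum strictly decreases
      have hax : σ (t+1) x = σ t y := by omega
      have hay : σ (t+1) y = σ t x := by omega
      have hsq : (∑ i, σ (t+1) i * σ (t+1) i) = ∑ i, σ t i * σ t i := by
        rw [hax, hay] at eq1; omega
      have e1 : idf x * σ t x = idf x * σ t y + idf x := by rw [heq]; ring
      have e2 : idf y * (σ t y + 1) = idf y * σ t y + idf y := by ring
      have hw : (∑ i, idf i * σ (t+1) i) < ∑ i, idf i * σ t i := by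
        rw [hax, hy] at eq2
        omega
      simp only [hm]
      rw [hsq]
      omega
  have hmono : ∀ t, m t + t ≤ m 0 := by
    intro t
    induction t with
    | zero => omega
    | succ t ih => have := hdec t; omega
  have := hmono (m 0 + 1)
  omega
end
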